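/- arXiv:1009.3435 — 7 statements merged into one kernel-verified Lean document; each statement's English description precedes it below -/
import Mathlib

section
/- The set of cyclic flats of a matroid M, ordered by inclusion, forms a lattice: for cyclic flats X and Y, their join is cl(X ∪ Y) and their meet is the union of all circuits of M contained in X ∩ Y. -/
open Matroid Set

variable {α : Type*}

/-- An element that lies in every base of `M`; a coloop. -/
def MCoPaper.Coloop (M : Matroid α) (e : α) : Prop := ∀ B, M.IsBase B → e ∈ B

/-- A circuit: a minimal dependent subset of the ground set. -/
def MCoPaper.Circuit (M : Matroid α) (C : Set α) : Prop :=
  C ⊆ M.E ∧ ¬ M.Indep C ∧ ∀ x ∈ C, M.Indep (C \ {x})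

/-- A cyclic flat: a flat whose restriction has no coloops. -/
def MCoPaper.CyclicFlat (M : Matroid α) (F : Set α) : Prop :=
  M.IsFlat F ∧ ∀ e ∈ F, ¬ MCoPaper.Coloop (M ↾ F) e

/-- The rank of a set: the largest cardinality of an independent subset. -/
noncomputable def MCoPaper.rk (M : Matroid α) (X : Set α) : ℕ :=
  sSup {n | ∃ I, M.Indep I ∧ I ⊆ X ∧ I.ncard = n}

open MCoPaper Classical in
/-- Mason's β function. -/
noncomputable def MCoPaper.beta [Fintype α] (M : Matroid α) (X : Finset α) : ℤ :=
  (rk M M.E : ℤ) - rk M ↑X -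
    ∑ Y ∈ (Finset.univ.filter (fun Y : Finset α => CyclicFlat M ↑Y ∧ X ⊂ Y)).attach,
      MCoPaper.beta M Y.1
  termination_by (Fintype.card α - X.card : ℕ)
  decreasing_by
    have hY := Y.2
    simp only [Finset.mem_filter, Finset.mem_univ, true_and] at hY
    have h1 : X.card < Y.1.card := Finset.card_lt_card hY.2
    have h2 : Y.1.card ≤ Fintype.card α := Y.1.card_le_univ
    omega

open MCoPaper Classical in
/-- Mason's α function. -/
noncomputable def MCoPaper.alpha [Fintype α] (M : Matroid α) (X : Finset α) : ℤ :=
  ((X.card : ℤ) - rk M ↑X) -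
    ∑ F ∈ (Finset.univ.filter (fun F : Finset α => M.IsFlat ↑F ∧ F ⊂ X)).attach,
      MCoPaper.alpha M F.1
  termination_by X.card
  decreasing_by
    have hF := F.2
    simp only [Finset.mem_filter, Finset.mem_univ, true_and] at hF
    exact Finset.card_lt_card hF.2

/-- `A : Fin n → Set α` is a presentation of `M`. -/
def MCoPaper.IsPresentation (M : Matroid α) {n : ℕ} (A : Fin n → Set α) : Prop :=
  (∀ i, A i ⊆ M.E) ∧
    ∀ I : Set α, M.Indep I ↔ ∃ φ : α → Fin n, Set.InjOn φ I ∧ ∀ x ∈ I, x ∈ A (φ x)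

/-- `M` is a transversal matroid. -/
def MCoPaper.Transversal (M : Matroid α) : Prop :=
  ∃ (n : ℕ) (A : Fin n → Set α), MCoPaper.IsPresentation M A

/-- `B` is a fundamental basis of `M`. -/
def MCoPaper.FundBasis (M : Matroid α) (B : Set α) : Prop :=
  M.IsBase B ∧ ∀ F, MCoPaper.CyclicFlat M F → F ⊆ M.closure (B ∩ F)

/-- `M` is a fundamental transversal matroid. -/
def MCoPaper.FundTransversal (M : Matroid α) : Prop :=
  ∃ B, MCoPaper.FundBasis M B

open MCoPaper

/-- Every dependent subset of the ground set of a finite matroid contains a circuit. -/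
lemma MCoPaper.exists_circuit_subset_aux [Fintype α] (M : Matroid α) :
    ∀ n : ℕ, ∀ D : Set α, D.ncard ≤ n → D ⊆ M.E → ¬ M.Indep D →
      ∃ C, C ⊆ D ∧ Circuit M C := by
  intro n
  induction n with
  | zero =>
    intro D hcard hDE hdep
    have : D = ∅ := by
      rw [← Set.ncard_eq_zero (Set.toFinite D)]; omega
    exact absurd (this ▸ M.empty_indep) hdep
  | succ n ih =>
    intro D hcard hDE hdep
    by_cases h : ∀ x ∈ D, M.Indep (D \ {x})
    · exact ⟨D, Subset.rfl, hDE, hdep, h⟩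
    push_neg at h
    obtain ⟨x, hx, hxd⟩ := h
    have hlt : (D \ {x}).ncard < D.ncard :=
      Set.ncard_diff_singleton_lt_of_mem hx (Set.toFinite D)
    obtain ⟨C, hCD, hC⟩ := ih (D \ {x}) (by omega) (diff_subset.trans hDE) hxd
    exact ⟨C, hCD.trans diff_subset, hC⟩

lemma MCoPaper.exists_circuit_subset [Fintype α] {M : Matroid α} {D : Set α}
    (hDE : D ⊆ M.E) (hdep : ¬ M.Indep D) : ∃ C, C ⊆ D ∧ Circuit M C :=
  MCoPaper.exists_circuit_subset_aux M D.ncard D le_rfl hDE hdep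

/-- If `e ∈ cl(S) \ S`, then there is a circuit through `e` inside `insert e S`. -/
lemma MCoPaper.exists_circuit_of_mem_closure [Fintype α] {M : Matroid α} {S : Set α} {e : α}
    (he : e ∈ M.closure S) (heS : e ∉ S) :
    ∃ C, Circuit M C ∧ e ∈ C ∧ C ⊆ insert e S := by
  obtain ⟨I, hI⟩ := M.exists_isBasis' S
  have hecl : e ∈ M.closure I := by rw [hI.closure_eq_closure]; exact he
  have heI : e ∉ I := fun h => heS (hI.subset h)
  have heE : e ∈ M.E := M.mem_ground_of_mem_closure he
  have hdep : ¬ M.Indep (insert e I) := by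
    intro hind
    rw [hI.indep.insert_indep_iff_of_notMem heI] at hind
    exact hind.2 hecl
  have hsub : insert e I ⊆ M.E :=
    insert_subset heE hI.indep.subset_ground
  obtain ⟨C, hCsub, hC⟩ := MCoPaper.exists_circuit_subset hsub hdep
  have heC : e ∈ C := by
    by_contra h
    have hCI : C ⊆ I := fun x hxC => by
      rcases hCsub hxC with rfl | hx
      · exact absurd hxC h
      · exact hx
    exact hC.2.1 (hI.indep.subset hCI)
  exact ⟨C, hC, heC, hCsub.trans (insert_subset_insert hI.subset)⟩

/-- Characterisation of non-coloops of a restriction via circuits. -/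
lemma MCoPaper.not_coloop_iff [Fintype α] {M : Matroid α} {F : Set α} (hF : F ⊆ M.E)
    {e : α} (he : e ∈ F) :
    (¬ MCoPaper.Coloop (M ↾ F) e) ↔ ∃ C, Circuit M C ∧ e ∈ C ∧ C ⊆ F := by
  constructor
  · intro h
    simp only [MCoPaper.Coloop, not_forall] at h
    obtain ⟨B, hB, heB⟩ := h
    rw [Matroid.isBase_restrict_iff'] at hB
    have hecl : e ∈ M.closure B := by
      rw [hB.closure_eq_closure]
      exact M.subset_closure F hF he
    obtain ⟨C, hC, heC, hCsub⟩ := MCoPaper.exists_circuit_of_mem_closure hecl heB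
    exact ⟨C, hC, heC, hCsub.trans (insert_subset he hB.subset)⟩
  · rintro ⟨C, hC, heC, hCF⟩ hcol
    have hind : (M ↾ F).Indep (C \ {e}) :=
      Matroid.restrict_indep_iff.mpr ⟨hC.2.2 e heC, diff_subset.trans hCF⟩
    obtain ⟨B, hB, hsub⟩ := Matroid.Indep.exists_isBase_superset hind
    have heB : e ∈ B := hcol B hB
    have hCB : C ⊆ B := fun x hx => by
      by_cases hxe : x = e
      · exact hxe ▸ heB
      · exact hsub ⟨hx, hxe⟩
    exact hC.2.1 ((Matroid.restrict_indep_iff.mp (hB.indep.subset hCB)).1)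

/-- A flat is cyclic iff every element lies on a circuit inside it. -/
lemma MCoPaper.cyclicFlat_iff [Fintype α] {M : Matroid α} {F : Set α} :
    CyclicFlat M F ↔ M.IsFlat F ∧ ∀ e ∈ F, ∃ C, Circuit M C ∧ e ∈ C ∧ C ⊆ F := by
  unfold CyclicFlat
  exact and_congr_right fun hF =>
    forall₂_congr fun e he => MCoPaper.not_coloop_iff hF.subset_ground he

lemma MCoPaper.flat_of_closure_subset {M : Matroid α} {F : Set α} (hFE : F ⊆ M.E)
    (h : M.closure F ⊆ F) : M.IsFlat F := by
  refine ⟨fun I X hIF hIX => ?_, hFE⟩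
  have hX : X ⊆ M.closure I := hIX.subset_closure
  rw [hIF.closure_eq_closure] at hX
  exact hX.trans h

lemma MCoPaper.flat_closure {M : Matroid α} (X : Set α) : M.IsFlat (M.closure X) :=
  MCoPaper.flat_of_closure_subset (M.closure_subset_ground X)
    (by rw [M.closure_closure])

open Classical in
theorem stmt1 [Fintype α] (M : Matroid α) (X Y : Set α) (hX : CyclicFlat M X)
    (hY : CyclicFlat M Y) :
    (CyclicFlat M (M.closure (X ∪ Y)) ∧ X ⊆ M.closure (X ∪ Y) ∧ Y ⊆ M.closure (X ∪ Y) ∧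
      ∀ Z, CyclicFlat M Z → X ⊆ Z → Y ⊆ Z → M.closure (X ∪ Y) ⊆ Z) ∧
    (CyclicFlat M (⋃₀ {C | Circuit M C ∧ C ⊆ X ∩ Y}) ∧
      ⋃₀ {C | Circuit M C ∧ C ⊆ X ∩ Y} ⊆ X ∧ ⋃₀ {C | Circuit M C ∧ C ⊆ X ∩ Y} ⊆ Y ∧
      ∀ Z, CyclicFlat M Z → Z ⊆ X → Z ⊆ Y → Z ⊆ ⋃₀ {C | Circuit M C ∧ C ⊆ X ∩ Y}) := by
  rw [cyclicFlat_iff] at hX hY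
  obtain ⟨hXflat, hXcyc⟩ := hX
  obtain ⟨hYflat, hYcyc⟩ := hY
  have hXE : X ⊆ M.E := hXflat.subset_ground
  have hYE : Y ⊆ M.E := hYflat.subset_ground
  have hXYE : X ∪ Y ⊆ M.E := union_subset hXE hYE
  have hXcl : X ⊆ M.closure (X ∪ Y) :=
    subset_union_left.trans (M.subset_closure _ hXYE)
  have hYcl : Y ⊆ M.closure (X ∪ Y) :=
    subset_union_right.trans (M.subset_closure _ hXYE)
  constructor
  · refine ⟨?_, hXcl, hYcl, ?_⟩
    · rw [cyclicFlat_iff]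
      refine ⟨flat_closure _, fun e he => ?_⟩
      by_cases heXY : e ∈ X ∪ Y
      · rcases heXY with heX | heY
        · obtain ⟨C, hC, heC, hCX⟩ := hXcyc e heX
          exact ⟨C, hC, heC, hCX.trans hXcl⟩
        · obtain ⟨C, hC, heC, hCY⟩ := hYcyc e heY
          exact ⟨C, hC, heC, hCY.trans hYcl⟩
      · obtain ⟨C, hC, heC, hCsub⟩ := exists_circuit_of_mem_closure he heXY
        exact ⟨C, hC, heC,
          hCsub.trans (insert_subset he (union_subset hXcl hYcl))⟩
    · intro Z hZ hXZ hYZ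
      have := M.closure_subset_closure (union_subset hXZ hYZ)
      rwa [hZ.1.closure] at this
  · set D := ⋃₀ {C | Circuit M C ∧ C ⊆ X ∩ Y} with hD
    have hDXY : D ⊆ X ∩ Y := sUnion_subset fun C hC => hC.2
    have hDE : D ⊆ M.E := hDXY.trans (inter_subset_left.trans hXE)
    have hXYflat : M.IsFlat (X ∩ Y) := by
      refine flat_of_closure_subset (inter_subset_left.trans hXE) (subset_inter ?_ ?_)
      · have := M.closure_subset_closure (inter_subset_left (s := X) (t := Y))
        rwa [hXflat.closure] at this
      · have := M.closure_subset_closure (inter_subset_right (s := X) (t := Y))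
        rwa [hYflat.closure] at this
    have hDflat : M.IsFlat D := by
      refine flat_of_closure_subset hDE fun e he => ?_
      by_cases heD : e ∈ D
      · exact heD
      have heXY : e ∈ X ∩ Y := by
        have := M.closure_subset_closure hDXY
        rw [hXYflat.closure] at this
        exact this he
      obtain ⟨C, hC, heC, hCsub⟩ := exists_circuit_of_mem_closure he heD
      have hCXY : C ⊆ X ∩ Y :=
        hCsub.trans (insert_subset heXY hDXY)
      exact ⟨C, ⟨hC, hCXY⟩, heC⟩
    refine ⟨?_, hDXY.trans inter_subset_left, hDXY.trans inter_subset_right, ?_⟩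
    · rw [cyclicFlat_iff]
      refine ⟨hDflat, fun e he => ?_⟩
      obtain ⟨C, hC, heC⟩ := he
      exact ⟨C, hC.1, heC, subset_sUnion_of_mem hC⟩
    · intro Z hZ hZX hZY
      rw [cyclicFlat_iff] at hZ
      intro e heZ
      obtain ⟨C, hC, heC, hCZ⟩ := hZ.2 e heZ
      exact ⟨C, ⟨hC, hCZ.trans (subset_inter hZX hZY)⟩, heC⟩
end

section
/- If (A_1, …, A_r) is a presentation of a transversal matroid M, then the complement E(M) − A_i is a flat of M for each i. -/
open Matroid Set

variable {α : Type*}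

open MCoPaper

theorem stmt4 [Fintype α] (M : Matroid α) {n : ℕ} (A : Fin n → Set α)
    (hA : IsPresentation M A) (i : Fin n) :
    M.IsFlat (M.E \ A i) := by
  classical
  constructor
  · intro I X hIF hIX e heX
    refine ⟨hIX.subset_ground heX, fun heA => ?_⟩
    have heI : e ∉ I := fun h => (hIF.subset h).2 heA
    -- I is independent; build an injection witnessing insert e I independent
    obtain ⟨φ, hφinj, hφmem⟩ := (hA.2 I).mp hIF.indep
    have hind : M.Indep (insert e I) := by
      refine (hA.2 (insert e I)).mpr ⟨fun x => if x = e then i else φ x, ?_, ?_⟩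
      · have hne : ∀ z ∈ I, φ z ≠ i := fun z hz hzi =>
          (hIF.subset hz).2 (hzi ▸ hφmem z hz)
        intro x hx y hy hxy
        simp only at hxy
        by_cases hxe : x = e <;> by_cases hye : y = e
        · rw [hxe, hye]
        · have hyI : y ∈ I := hy.resolve_left hye
          rw [if_pos hxe, if_neg hye] at hxy
          exact absurd hxy.symm (hne y hyI)
        · have hxI : x ∈ I := hx.resolve_left hxe
          rw [if_neg hxe, if_pos hye] at hxy
          exact absurd hxy (hne x hxI)
        · rw [if_neg hxe, if_neg hye] at hxy
          exact hφinj (hx.resolve_left hxe) (hy.resolve_left hye) hxy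
      · intro x hx
        show x ∈ A (if x = e then i else φ x)
        by_cases hxe : x = e
        · rw [if_pos hxe, hxe]; exact heA
        · rw [if_neg hxe]; exact hφmem x (hx.resolve_left hxe)
    have hecl : e ∈ M.closure I := hIX.subset_closure heX
    rw [hIF.indep.mem_closure_iff_of_notMem heI] at hecl
    exact hecl.1 hind
  · exact diff_subset
end

section
/- If (A_1, …, A_r) is a presentation of a transversal matroid M and x is a coloop of M \ A_i (the deletion of A_i), then replacing A_i by A_i ∪ {x} yields another presentation of M. -/
open Matroid Set

variable {α : Type*}

open Finset in
/-- Hall-condition augmentation: if `S` and `T` both satisfy the Hall condition and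
`|S| < |T|`, then `S` can be augmented by an element of `T \ S` keeping the Hall condition. -/
lemma hall_aug {β : Type*} [DecidableEq α] [DecidableEq β] (N : α → Finset β) (S T : Finset α)
    (hS : ∀ W ⊆ S, W.card ≤ (W.biUnion N).card)
    (hT : ∀ W ⊆ T, W.card ≤ (W.biUnion N).card)
    (hlt : S.card < T.card) :
    ∃ t ∈ T, t ∉ S ∧ ∀ W ⊆ insert t S, W.card ≤ (W.biUnion N).card := by
  by_contra hcon
  push_neg at hcon
  have key : ∀ t, t ∈ T → t ∉ S →
      ∃ Z : Finset α, Z ⊆ S ∧ (Z.biUnion N).card ≤ Z.card ∧ N t ⊆ Z.biUnion N := by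
    intro t ht hts
    obtain ⟨W, hWsub, hWcard⟩ := hcon t ht hts
    have htW : t ∈ W := by
      by_contra htW
      have hWS : W ⊆ S := by
        intro a ha
        rcases Finset.mem_insert.1 (hWsub ha) with rfl | h
        · exact absurd ha htW
        · exact h
      have := hS W hWS; omega
    have hZS : W.erase t ⊆ S := by
      intro a ha
      obtain ⟨h1, h2⟩ := Finset.mem_erase.1 ha
      rcases Finset.mem_insert.1 (hWsub h2) with rfl | h
      · exact absurd rfl h1
      · exact h
    have hsub : (W.erase t).biUnion N ⊆ W.biUnion N :=
      Finset.biUnion_subset_biUnion_of_subset_left _ (Finset.erase_subset _ _)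
    have hcard1 : (W.erase t).card = W.card - 1 := Finset.card_erase_of_mem htW
    have hc2 : (W.erase t).card ≤ ((W.erase t).biUnion N).card := hS _ hZS
    have hc3 : ((W.erase t).biUnion N).card ≤ (W.biUnion N).card := Finset.card_le_card hsub
    have hWpos : 1 ≤ W.card := Finset.card_pos.2 ⟨t, htW⟩
    have heq : (W.erase t).biUnion N = W.biUnion N := by
      apply Finset.eq_of_subset_of_card_le hsub
      omega
    refine ⟨W.erase t, hZS, by omega, ?_⟩
    rw [heq]
    exact Finset.subset_biUnion_of_mem N htW
  choose! Z hZ1 hZ2 hZ3 using key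
  -- tight sets are closed under union
  have tight_union : ∀ Z1 Z2 : Finset α, Z1 ⊆ S → Z2 ⊆ S →
      (Z1.biUnion N).card ≤ Z1.card → (Z2.biUnion N).card ≤ Z2.card →
      ((Z1 ∪ Z2).biUnion N).card ≤ (Z1 ∪ Z2).card := by
    intro Z1 Z2 h1 h2 t1 t2
    have hbu : (Z1 ∪ Z2).biUnion N = Z1.biUnion N ∪ Z2.biUnion N := by
      ext j; simp [Finset.mem_biUnion, Finset.mem_union, or_and_right, exists_or]
    have e1 : (Z1.biUnion N ∪ Z2.biUnion N).card + (Z1.biUnion N ∩ Z2.biUnion N).card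
        = (Z1.biUnion N).card + (Z2.biUnion N).card := Finset.card_union_add_card_inter _ _
    have e2 : (Z1 ∪ Z2).card + (Z1 ∩ Z2).card = Z1.card + Z2.card :=
      Finset.card_union_add_card_inter _ _
    have e3 : ((Z1 ∩ Z2).biUnion N).card ≤ (Z1.biUnion N ∩ Z2.biUnion N).card := by
      apply Finset.card_le_card
      intro j hj
      obtain ⟨a, ha, hja⟩ := Finset.mem_biUnion.1 hj
      exact Finset.mem_inter.2 ⟨Finset.mem_biUnion.2 ⟨a, (Finset.mem_inter.1 ha).1, hja⟩,
        Finset.mem_biUnion.2 ⟨a, (Finset.mem_inter.1 ha).2, hja⟩⟩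
    have e4 : (Z1 ∩ Z2).card ≤ ((Z1 ∩ Z2).biUnion N).card :=
      hS _ (subset_trans Finset.inter_subset_left h1)
    rw [hbu]
    omega
  set W : Finset α := (T \ S).sup Z with hW
  have hWsubS : W ⊆ S ∧ (W.biUnion N).card ≤ W.card := by
    rw [hW]
    refine Finset.sup_induction (p := fun w => w ⊆ S ∧ (w.biUnion N).card ≤ w.card)
      (by simp) ?_ ?_
    · intro a ha b hb
      exact ⟨Finset.union_subset ha.1 hb.1, tight_union a b ha.1 hb.1 ha.2 hb.2⟩
    · intro t ht
      obtain ⟨ht1, ht2⟩ := Finset.mem_sdiff.1 ht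
      exact ⟨hZ1 t ht1 ht2, hZ2 t ht1 ht2⟩
  set U : Finset α := (T \ S) ∪ (W ∩ T) with hU
  have hUT : U ⊆ T :=
    Finset.union_subset (Finset.sdiff_subset) (Finset.inter_subset_right)
  have hUN : U.biUnion N ⊆ W.biUnion N := by
    apply Finset.biUnion_subset.2
    intro a ha
    rcases Finset.mem_union.1 ha with h | h
    · obtain ⟨h1, h2⟩ := Finset.mem_sdiff.1 h
      calc N a ⊆ (Z a).biUnion N := hZ3 a h1 h2
        _ ⊆ W.biUnion N :=
          Finset.biUnion_subset_biUnion_of_subset_left _ (Finset.le_sup (by simp [h1, h2]))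
    · exact Finset.subset_biUnion_of_mem N (Finset.mem_inter.1 h).1
  have hdisj : Disjoint (T \ S) (W ∩ T) := by
    apply Finset.disjoint_left.2
    intro a ha hb
    exact (Finset.mem_sdiff.1 ha).2 (hWsubS.1 (Finset.mem_inter.1 hb).1)
  have hUcard : U.card = (T \ S).card + (W ∩ T).card := Finset.card_union_of_disjoint hdisj
  have hWcard : (W ∩ T).card + (W \ T).card = W.card := Finset.card_inter_add_card_sdiff _ _
  have hWT : (W \ T).card ≤ (S \ T).card := Finset.card_le_card (by
    intro a ha
    obtain ⟨h1, h2⟩ := Finset.mem_sdiff.1 ha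
    exact Finset.mem_sdiff.2 ⟨hWsubS.1 h1, h2⟩)
  have hST : (S \ T).card < (T \ S).card := by
    have e1 : (S ∩ T).card + (S \ T).card = S.card := Finset.card_inter_add_card_sdiff _ _
    have e2 : (T ∩ S).card + (T \ S).card = T.card := Finset.card_inter_add_card_sdiff _ _
    rw [Finset.inter_comm] at e2
    omega
  have h1 : U.card ≤ (U.biUnion N).card := hT U hUT
  have h2 : (U.biUnion N).card ≤ (W.biUnion N).card := Finset.card_le_card hUN
  omega

variable {n : ℕ}

/-- `S` can be matched into the family `A` using only indices in `K`. -/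
def MchOn (A : Fin n → Set α) (K : Set (Fin n)) (S : Set α) : Prop :=
  ∃ φ : α → Fin n, Set.InjOn φ S ∧ ∀ a ∈ S, φ a ∈ K ∧ a ∈ A (φ a)

lemma MchOn.subset {A : Fin n → Set α} {K : Set (Fin n)} {S T : Set α}
    (h : MchOn A K T) (hST : S ⊆ T) : MchOn A K S := by
  obtain ⟨φ, h1, h2⟩ := h
  exact ⟨φ, h1.mono hST, fun a ha => h2 a (hST ha)⟩

/-- The allowed neighborhood of an element. -/
noncomputable def nbr (A : Fin n → Set α) (K : Set (Fin n)) (a : α) : Finset (Fin n) :=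
  (Set.toFinite {j | j ∈ K ∧ a ∈ A j}).toFinset

lemma mem_nbr {A : Fin n → Set α} {K : Set (Fin n)} {a : α} {j : Fin n} :
    j ∈ nbr A K a ↔ j ∈ K ∧ a ∈ A j := Set.Finite.mem_toFinset _

lemma hall_of_mchOn [DecidableEq α] {A : Fin n → Set α} {K : Set (Fin n)} {S : Finset α}
    (h : MchOn A K ↑S) : ∀ W ⊆ S, W.card ≤ (W.biUnion (nbr A K)).card := by
  obtain ⟨φ, hinj, hφ⟩ := h
  intro W hWS
  have hinjW : Set.InjOn φ ↑W := hinj.mono (by exact_mod_cast hWS)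
  have : W.card = (W.image φ).card := (Finset.card_image_of_injOn hinjW).symm
  rw [this]
  apply Finset.card_le_card
  intro j hj
  obtain ⟨a, ha, rfl⟩ := Finset.mem_image.1 hj
  exact Finset.mem_biUnion.2 ⟨a, ha, mem_nbr.2 ⟨(hφ a (hWS ha)).1, (hφ a (hWS ha)).2⟩⟩

lemma mchOn_of_hall [DecidableEq α] {A : Fin n → Set α} {K : Set (Fin n)} {S : Finset α}
    (hne : Nonempty (α → Fin n))
    (h : ∀ W ⊆ S, W.card ≤ (W.biUnion (nbr A K)).card) : MchOn A K ↑S := by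
  obtain ⟨φ₀⟩ := hne
  have hall : ∀ s : Finset {a // a ∈ S}, s.card ≤ (s.biUnion (fun a => nbr A K a.1)).card := by
    intro s
    have h1 : (s.image Subtype.val).card = s.card :=
      Finset.card_image_of_injective _ Subtype.val_injective
    have h2 : (s.image Subtype.val).biUnion (nbr A K) = s.biUnion (fun a => nbr A K a.1) := by
      ext j
      simp [Finset.mem_biUnion]
    have h3 := h (s.image Subtype.val) (by intro a ha; obtain ⟨b, _, rfl⟩ := Finset.mem_image.1 ha; exact b.2)
    rw [h2, h1] at h3
    exact h3
  obtain ⟨f, hfinj, hf⟩ := (Finset.all_card_le_biUnion_card_iff_exists_injective _).1 hall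
  classical
  refine ⟨fun a => if h : a ∈ S then f ⟨a, h⟩ else φ₀ a, ?_, ?_⟩
  · intro a ha b hb hab
    simp only [Finset.mem_coe] at ha hb
    simp only [dif_pos ha, dif_pos hb] at hab
    exact congrArg Subtype.val (hfinj hab)
  · intro a ha
    simp only [Finset.mem_coe] at ha
    simp only [dif_pos ha]
    exact mem_nbr.1 (hf ⟨a, ha⟩)

/-- Augmentation for partial transversals. -/
lemma mchOn_aug [DecidableEq α] {A : Fin n → Set α} {K : Set (Fin n)} {S T : Finset α}
    (hne : Nonempty (α → Fin n)) (hS : MchOn A K ↑S) (hT : MchOn A K ↑T)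
    (hlt : S.card < T.card) :
    ∃ t ∈ T, t ∉ S ∧ MchOn A K ↑(insert t S) := by
  obtain ⟨t, ht, hts, hhall⟩ :=
    hall_aug (nbr A K) S T (hall_of_mchOn hS) (hall_of_mchOn hT) hlt
  exact ⟨t, ht, hts, mchOn_of_hall hne hhall⟩

/-- Decomposition: a full matching either avoids `i` or uses `i` on one element of `A i`. -/
lemma mchOn_cases {A : Fin n → Set α} {i : Fin n} {S : Set α}
    (h : MchOn A Set.univ S) :
    MchOn A {i}ᶜ S ∨ ∃ a ∈ S ∩ A i, MchOn A {i}ᶜ (S \ {a}) := by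
  obtain ⟨φ, hinj, hφ⟩ := h
  by_cases hc : ∃ a ∈ S, φ a = i
  · obtain ⟨a, ha, hai⟩ := hc
    refine Or.inr ⟨a, ⟨ha, hai ▸ (hφ a ha).2⟩, φ, hinj.mono Set.diff_subset, ?_⟩
    intro b hb
    obtain ⟨hbS, hba⟩ := hb
    refine ⟨?_, (hφ b hbS).2⟩
    intro hbi
    simp only [Set.mem_singleton_iff] at hbi
    exact hba (hinj hbS ha (by rw [hbi, hai]))
  · push_neg at hc
    exact Or.inl ⟨φ, hinj, fun a ha => ⟨fun hia => hc a ha (by simpa using hia), (hφ a ha).2⟩⟩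

/-- Extension: a matching avoiding `i` extends to a full matching by sending `y ∈ A i` to `i`. -/
lemma mchOn_extend [DecidableEq α] {A : Fin n → Set α} {i : Fin n} {S : Set α} {y : α}
    (h : MchOn A {i}ᶜ S) (hy : y ∈ A i) : MchOn A Set.univ (insert y S) := by
  obtain ⟨φ, hinj, hφ⟩ := h
  refine ⟨fun a => if a = y then i else φ a, ?_, ?_⟩
  · intro a ha b hb hab
    by_cases hay : a = y <;> by_cases hby : b = y
    · rw [hay, hby]
    · simp only [if_pos hay, if_neg hby] at hab
      rcases (Set.mem_insert_iff.1 hb) with h' | h'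
      · exact absurd h' hby
      · exact absurd hab.symm ((hφ b h').1)
    · simp only [if_neg hay, if_pos hby] at hab
      rcases (Set.mem_insert_iff.1 ha) with h' | h'
      · exact absurd h' hay
      · exact absurd hab ((hφ a h').1)
    · simp only [if_neg hay, if_neg hby] at hab
      rcases (Set.mem_insert_iff.1 ha) with h' | h'
      · exact absurd h' hay
      rcases (Set.mem_insert_iff.1 hb) with h'' | h''
      · exact absurd h'' hby
      exact hinj h' h'' hab
  · intro a ha
    by_cases hay : a = y
    · simp only [if_pos hay, hay]
      exact ⟨Set.mem_univ _, hy⟩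
    · rcases (Set.mem_insert_iff.1 ha) with h' | h'
      · exact absurd h' hay
      simp only [if_neg hay]
      exact ⟨Set.mem_univ _, (hφ a h').2⟩


open MCoPaper

theorem stmt5 [Fintype α] (M : Matroid α) {n : ℕ} (A : Fin n → Set α)
    (hA : IsPresentation M A) (i : Fin n) (x : α)
    (hx : Coloop (M ↾ (M.E \ A i)) x) :
    IsPresentation M (Function.update A i (A i ∪ {x})) := by
  classical
  obtain ⟨hAE, hAI⟩ := hA
  have hne : Nonempty (α → Fin n) := by
    obtain ⟨φ, -, -⟩ := (hAI ∅).1 M.empty_indep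
    exact ⟨φ⟩
  have hindep_iff : ∀ S : Set α, M.Indep S ↔ MchOn A Set.univ S := by
    intro S
    rw [hAI S]
    constructor
    · rintro ⟨φ, h1, h2⟩; exact ⟨φ, h1, fun a ha => ⟨Set.mem_univ _, h2 a ha⟩⟩
    · rintro ⟨φ, h1, h2⟩; exact ⟨φ, h1, fun a ha => (h2 a ha).2⟩
  have hxE : x ∈ M.E \ A i := by
    obtain ⟨B, hB⟩ := (M ↾ (M.E \ A i)).exists_isBase
    exact hB.subset_ground (hx B hB)
  have hcoloop : ∀ J : Set α, M.Indep J → J ⊆ M.E \ A i → M.Indep (insert x J) := by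
    intro J hJ hJE
    have hJN : (M ↾ (M.E \ A i)).Indep J := Matroid.restrict_indep_iff.2 ⟨hJ, hJE⟩
    obtain ⟨B, hB, hJB⟩ := hJN.exists_isBase_superset
    have hxB := hx B hB
    exact (Matroid.restrict_indep_iff.1 (hB.indep.subset (Set.insert_subset hxB hJB))).1
  -- key lemma: adding x to a set matchable avoiding slot i keeps independence
  have key : ∀ J : Set α, MchOn A {i}ᶜ J → M.Indep (insert x J) := by
    intro J hJ
    have hJind : M.Indep J := (hindep_iff J).2 (by
      obtain ⟨φ, h1, h2⟩ := hJ
      exact ⟨φ, h1, fun a ha => ⟨Set.mem_univ _, (h2 a ha).2⟩⟩)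
    by_cases hxJ : x ∈ J
    · rwa [Set.insert_eq_self.2 hxJ]
    by_contra hdep
    have hxJE : insert x J ⊆ M.E := Set.insert_subset hxE.1 hJind.subset_ground
    have hfinset : ∃ k : ℕ, ∃ C : Finset α, C.card = k ∧ ↑C ⊆ insert x J ∧ ¬ M.Indep ↑C := by
      refine ⟨_, (Set.toFinite (insert x J)).toFinset, rfl, ?_, ?_⟩
      · rw [Set.Finite.coe_toFinset]
      · rw [Set.Finite.coe_toFinset]; exact hdep
    obtain ⟨C, hCcard, hCsub, hCdep⟩ := Nat.find_spec hfinset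
    have hmin : ∀ e ∈ C, M.Indep ↑(C.erase e) := by
      intro e he
      by_contra hcon
      have hlt : (C.erase e).card < Nat.find hfinset := by
        rw [← hCcard, Finset.card_erase_of_mem he]
        have : 0 < C.card := Finset.card_pos.2 ⟨e, he⟩
        omega
      exact Nat.find_min hfinset hlt ⟨C.erase e, rfl,
        subset_trans (by exact_mod_cast Finset.coe_subset.2 (Finset.erase_subset e C)) hCsub,
        hcon⟩
    have hCE : (↑C : Set α) ⊆ M.E := subset_trans hCsub hxJE
    have hxCs : x ∈ (↑C : Set α) → x ∈ C := fun h => h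
    have hxC : x ∈ C := by
      by_contra hxC
      refine hCdep (hJind.subset ?_)
      intro a ha
      rcases Set.mem_insert_iff.1 (hCsub ha) with rfl | h
      · exact absurd ha hxC
      · exact h
    have hCAi : ∃ y ∈ C, y ∈ A i := by
      by_contra hcon
      push_neg at hcon
      have h1 : M.Indep (insert x (↑(C.erase x) : Set α)) := by
        refine hcoloop _ (hmin x hxC) ?_
        intro a ha
        rw [Finset.coe_erase] at ha
        exact ⟨hCE ha.1, hcon a ha.1⟩
      rw [Finset.coe_erase, Set.insert_diff_singleton, Set.insert_eq_self.2 (show x ∈ (↑C : Set α) from hxC)] at h1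
      exact hCdep h1
    obtain ⟨y, hyC, hyAi⟩ := hCAi
    have hyx : y ≠ x := fun h => hxE.2 (h ▸ hyAi)
    have hCy : M.Indep ↑(C.erase y) := hmin y hyC
    rcases mchOn_cases (i := i) ((hindep_iff _).1 hCy) with hc | ⟨z, hz, hmz⟩
    · have h1 := mchOn_extend hc hyAi
      rw [Finset.coe_erase, Set.insert_diff_singleton, Set.insert_eq_self.2 (show y ∈ (↑C : Set α) from hyC)] at h1
      exact hCdep ((hindep_iff _).2 h1)
    · obtain ⟨hz1, hzAi⟩ := hz
      rw [Finset.coe_erase] at hz1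
      obtain ⟨hzC, hzy'⟩ := hz1
      have hzy : z ≠ y := by simpa using hzy'
      have hzx : z ≠ x := fun h => hxE.2 (h ▸ hzAi)
      have hzey : z ∈ C.erase y := Finset.mem_erase.2 ⟨hzy, hzC⟩
      have hS : MchOn A {i}ᶜ ↑((C.erase y).erase z) := by
        simp only [Finset.coe_erase] at hmz ⊢
        exact hmz
      have hT : MchOn A {i}ᶜ ↑(C.erase x) := by
        refine hJ.subset ?_
        intro a ha
        rw [Finset.coe_erase] at ha
        rcases Set.mem_insert_iff.1 (hCsub ha.1) with rfl | h
        · exact absurd (Set.mem_singleton _) ha.2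
        · exact h
      have hcards : ((C.erase y).erase z).card < (C.erase x).card := by
        rw [Finset.card_erase_of_mem hzey, Finset.card_erase_of_mem hyC,
          Finset.card_erase_of_mem hxC]
        have h1 : 0 < (C.erase y).card := Finset.card_pos.2 ⟨z, hzey⟩
        have h2 : 0 < C.card := Finset.card_pos.2 ⟨y, hyC⟩
        have h3 : (C.erase y).card = C.card - 1 := Finset.card_erase_of_mem hyC
        omega
      obtain ⟨w, hwT, hwS, hwm⟩ := mchOn_aug hne hS hT hcards
      obtain ⟨hwx, hwC⟩ := Finset.mem_erase.1 hwT
      have hwyz : w = y ∨ w = z := by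
        by_contra hcon
        push_neg at hcon
        exact hwS (Finset.mem_erase.2 ⟨hcon.2, Finset.mem_erase.2 ⟨hcon.1, hwC⟩⟩)
      have hyCs : y ∈ (↑C : Set α) := hyC
      have hzCs : z ∈ (↑C : Set α) := hzC
      rw [Finset.coe_insert, Finset.coe_erase, Finset.coe_erase] at hwm
      rcases hwyz with rfl | rfl
      · -- w = y, extend with z ↦ i
        have h1 := mchOn_extend hwm hzAi
        have hCeq : insert z (insert w (((↑C : Set α) \ {w}) \ {z})) = (↑C : Set α) := by
          ext a
          simp only [Set.mem_insert_iff, Set.mem_diff, Set.mem_singleton_iff]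
          constructor
          · rintro (rfl | rfl | ⟨⟨h1, _⟩, _⟩)
            · exact hzCs
            · exact hyCs
            · exact h1
          · intro haC
            by_cases ha1 : a = z
            · exact Or.inl ha1
            by_cases ha2 : a = w
            · exact Or.inr (Or.inl ha2)
            exact Or.inr (Or.inr ⟨⟨haC, ha2⟩, ha1⟩)
        rw [hCeq] at h1
        exact hCdep ((hindep_iff _).2 h1)
      · -- w = z, extend with y ↦ i
        have h1 := mchOn_extend hwm hyAi
        have hCeq : insert y (insert w (((↑C : Set α) \ {y}) \ {w})) = (↑C : Set α) := by
          ext a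
          simp only [Set.mem_insert_iff, Set.mem_diff, Set.mem_singleton_iff]
          constructor
          · rintro (rfl | rfl | ⟨⟨h1, _⟩, _⟩)
            · exact hyCs
            · exact hzCs
            · exact h1
          · intro haC
            by_cases ha1 : a = y
            · exact Or.inl ha1
            by_cases ha2 : a = w
            · exact Or.inr (Or.inl ha2)
            exact Or.inr (Or.inr ⟨⟨haC, ha1⟩, ha2⟩)
        rw [hCeq] at h1
        exact hCdep ((hindep_iff _).2 h1)
  -- assemble the presentation
  constructor
  · intro j
    by_cases hj : j = i
    · subst hj
      rw [Function.update_self]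
      exact Set.union_subset (hAE j) (by simpa using hxE.1)
    · rw [Function.update_of_ne hj]
      exact hAE j
  · intro I
    constructor
    · intro hI
      obtain ⟨φ, h1, h2⟩ := (hAI I).1 hI
      refine ⟨φ, h1, fun a ha => ?_⟩
      by_cases hj : φ a = i
      · rw [hj, Function.update_self]
        exact Or.inl (hj ▸ h2 a ha)
      · rw [Function.update_of_ne hj]
        exact h2 a ha
    · rintro ⟨φ, hinj, hφ⟩
      by_cases hcase : ∀ a ∈ I, φ a = i → a ∈ A i
      · refine (hAI I).2 ⟨φ, hinj, fun a ha => ?_⟩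
        by_cases hj : φ a = i
        · exact hj ▸ hcase a ha hj
        · have := hφ a ha
          rwa [Function.update_of_ne hj] at this
      · push_neg at hcase
        obtain ⟨a, haI, hai, haAi⟩ := hcase
        have hax : a = x := by
          have := hφ a haI
          rw [hai, Function.update_self] at this
          rcases this with h | h
          · exact absurd h haAi
          · simpa using h
        have hxI : x ∈ I := hax ▸ haI
        have hφx : φ x = i := hax ▸ hai
        have hJ : MchOn A {i}ᶜ (I \ {x}) := by
          refine ⟨φ, hinj.mono Set.diff_subset, fun b hb => ?_⟩
          obtain ⟨hbI, hbx⟩ := hb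
          have hbφ : φ b ≠ i := by
            intro h
            exact hbx (by simpa using hinj hbI hxI (h.trans hφx.symm))
          constructor
          · simpa using hbφ
          · have := hφ b hbI
            rwa [Function.update_of_ne hbφ] at this
        have hfin := key (I \ {x}) hJ
        rwa [Set.insert_diff_singleton, Set.insert_eq_self.2 hxI] at hfin
end

section
/- If B is a fundamental basis of a matroid M, then for every nonempty family F of cyclic flats of M, r(⋃F) = |B ∩ (⋃F)| and r(⋂F) = |B ∩ (⋂F)|. -/
open Matroid Set

variable {α : Type*}

open MCoPaper

lemma MCoPaper.rk_eq_of_spans [Fintype α] (M : Matroid α) {B X : Set α} (hB : M.IsBase B)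
    (hX : X ⊆ M.closure (B ∩ X)) : rk M X = (B ∩ X).ncard := by
  have hBX : M.Indep (B ∩ X) := hB.indep.inter_right X
  have hXE : X ⊆ M.E := hX.trans (M.closure_subset_ground _)
  have hbas : M.IsBasis (B ∩ X) X :=
    hBX.isBasis_of_subset_of_subset_closure inter_subset_right hX
  have hbd : ∀ n ∈ {n | ∃ I, M.Indep I ∧ I ⊆ X ∧ I.ncard = n}, n ≤ (B ∩ X).ncard := by
    rintro n ⟨I, hI, hIX, rfl⟩
    obtain ⟨J, hJ, hIJ⟩ := hI.subset_isBasis_of_subset hIX hXE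
    have hcard : J.encard = (B ∩ X).encard := hJ.encard_eq_encard hbas
    have : J.ncard = (B ∩ X).ncard := by rw [Set.ncard_def, hcard, ← Set.ncard_def]
    exact this ▸ Set.ncard_le_ncard hIJ J.toFinite
  have hmem : (B ∩ X).ncard ∈ {n | ∃ I, M.Indep I ∧ I ⊆ X ∧ I.ncard = n} :=
    ⟨B ∩ X, hBX, inter_subset_right, rfl⟩
  exact le_antisymm (csSup_le ⟨_, hmem⟩ hbd) (le_csSup ⟨_, hbd⟩ hmem)

theorem stmt10 [Fintype α] (M : Matroid α) (B : Set α) (hB : FundBasis M B)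
    (F : Finset (Set α)) (hne : F.Nonempty) (hcf : ∀ Y ∈ F, CyclicFlat M Y) :
    rk M (⋃₀ ↑F) = (B ∩ ⋃₀ ↑F).ncard ∧ rk M (⋂₀ ↑F) = (B ∩ ⋂₀ ↑F).ncard := by
  have hspan : ∀ Y ∈ F, Y ⊆ M.closure (B ∩ Y) := fun Y hY => hB.2 Y (hcf Y hY)
  constructor
  · refine rk_eq_of_spans M hB.1 ?_
    rintro x ⟨Y, hY, hx⟩
    exact M.closure_subset_closure
      (inter_subset_inter_right B (subset_sUnion_of_mem hY)) (hspan Y hY hx)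
  · refine rk_eq_of_spans M hB.1 ?_
    have hJs : ((fun Y => B ∩ Y) '' ↑F).Nonempty := (hne.to_set).image _
    have key := hB.1.indep.closure_sInter_eq_biInter_closure_of_forall_subset hJs
      (by rintro J ⟨Y, _, rfl⟩; exact inter_subset_left)
    have hsI : ⋂₀ ((fun Y => B ∩ Y) '' ↑F) = B ∩ ⋂₀ ↑F := by
      ext x
      simp only [mem_sInter, mem_image, Finset.mem_coe, mem_inter_iff, forall_exists_index]
      constructor
      · intro h
        obtain ⟨Y, hY⟩ := hne
        exact ⟨(h _ Y ⟨hY, rfl⟩).1, fun Z hZ => (h _ Z ⟨hZ, rfl⟩).2⟩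
      · rintro ⟨hxB, hx⟩ J Y ⟨hY, rfl⟩
        exact ⟨hxB, hx Y hY⟩
    rw [← hsI]
    intro x hx
    rw [key, mem_iInter₂]
    rintro J ⟨Y, hY, rfl⟩
    exact hspan Y hY (hx Y hY)
end

section
/- Let β be defined on subsets of a finite matroid M by β(X) = r(M) − r(X) − Σ_{Y cyclic flat, X ⊊ Y} β(Y). If F is a nonempty filter in the lattice of cyclic flats Z(M), then Σ_{Y∈F} β(Y) = r(M) − Σ_{∅≠F'⊆F} (−1)^{|F'|+1} r(⋃F'). -/
open Matroid Set

variable {α : Type*}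

open MCoPaper

section Helpers

open Finset in
lemma MCoPaper.signsum {γ : Type*} (G : Finset (Finset γ)) (hG : G.Nonempty) :
    ∑ F' ∈ G.powerset.filter (fun F' => F'.Nonempty), (-1 : ℤ) ^ (F'.card + 1) = 1 := by
  classical
  have h0 := Finset.sum_powerset_neg_one_pow_card_of_nonempty hG
  have hfe : G.powerset.filter (fun F' => F'.Nonempty) = G.powerset.erase ∅ := by
    ext t
    simp [Finset.mem_erase, Finset.nonempty_iff_ne_empty, and_comm]
  have h1 : ∑ F' ∈ G.powerset.erase ∅, (-1 : ℤ) ^ F'.card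
      = ∑ F' ∈ G.powerset, (-1 : ℤ) ^ F'.card - (-1 : ℤ) ^ (∅ : Finset γ).card := by
    rw [← Finset.add_sum_erase _ _ (Finset.empty_mem_powerset G)]
    abel
  have h2 : ∑ F' ∈ G.powerset.erase ∅, (-1 : ℤ) ^ (F'.card + 1)
      = -∑ F' ∈ G.powerset.erase ∅, (-1 : ℤ) ^ F'.card := by
    rw [← Finset.sum_neg_distrib]
    exact Finset.sum_congr rfl fun x _ => by ring
  rw [hfe, h2, h1, h0]
  simp

lemma MCoPaper.rk_bddAbove [Fintype α] (M : Matroid α) (X : Set α) :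
    BddAbove {n | ∃ I, M.Indep I ∧ I ⊆ X ∧ I.ncard = n} := by
  refine ⟨Fintype.card α, ?_⟩
  rintro n ⟨I, -, -, rfl⟩
  simpa [Set.ncard_univ] using Set.ncard_le_ncard (Set.subset_univ I) Set.finite_univ

lemma MCoPaper.rk_mem_zero (M : Matroid α) (X : Set α) :
    0 ∈ {n | ∃ I, M.Indep I ∧ I ⊆ X ∧ I.ncard = n} :=
  ⟨∅, M.empty_indep, Set.empty_subset _, by simp⟩

lemma MCoPaper.rk_closure [Fintype α] (M : Matroid α) (S : Set α) (hS : S ⊆ M.E) :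
    rk M (M.closure S) = rk M S := by
  unfold MCoPaper.rk
  apply le_antisymm
  · apply csSup_le ⟨0, rk_mem_zero M _⟩
    rintro n ⟨I, hI, hIX, rfl⟩
    obtain ⟨I', hI', hII'⟩ := hI.subset_isBasis_of_subset hIX (M.closure_subset_ground S)
    obtain ⟨J, hJ⟩ := M.exists_isBasis S hS
    have hJ' : M.IsBasis J (M.closure S) := hJ.isBasis_closure_right
    have hcard : I'.ncard = J.ncard := by
      rw [Set.ncard_def, Set.ncard_def, hI'.encard_eq_encard hJ']
    calc I.ncard ≤ I'.ncard := Set.ncard_le_ncard hII' (Set.toFinite I')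
      _ = J.ncard := hcard
      _ ≤ _ := le_csSup (rk_bddAbove M S) ⟨J, hJ.indep, hJ.subset, rfl⟩
  · refine csSup_le_csSup (rk_bddAbove M _) ⟨0, rk_mem_zero M _⟩ ?_
    rintro n ⟨I, h1, h2, h3⟩
    exact ⟨I, h1, h2.trans (M.subset_closure S hS), h3⟩

lemma MCoPaper.closure_flat' (M : Matroid α) (X : Set α) : M.IsFlat (M.closure X) := by
  rw [Matroid.closure_def]
  haveI : Nonempty ({F : Set α | M.IsFlat F ∧ X ∩ M.E ⊆ F} : Set (Set α)) :=
    ⟨⟨M.E, M.ground_isFlat, Set.inter_subset_right⟩⟩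
  rw [Set.sInter_eq_iInter]
  exact Matroid.IsFlat.iInter fun F => F.2.1

lemma MCoPaper.CyclicFlat.mem_closure_diff {M : Matroid α} {X : Set α}
    (hX : CyclicFlat M X) {x : α} (hx : x ∈ X) : x ∈ M.closure (X \ {x}) := by
  have hXE : X ⊆ M.E := hX.1.subset_ground
  have h := hX.2 x hx
  rw [MCoPaper.Coloop] at h
  push_neg at h
  obtain ⟨B, hB, hxB⟩ := h
  have hBbasis : M.IsBasis B X := (Matroid.isBase_restrict_iff hXE).1 hB
  have hxcl : x ∈ M.closure B := hBbasis.subset_closure hx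
  exact M.closure_subset_closure
    (Set.subset_diff_singleton hBbasis.subset hxB) hxcl

lemma MCoPaper.closure_cyclicFlat {M : Matroid α} {S : Set α} (hSE : S ⊆ M.E)
    (hcyc : ∀ x ∈ S, x ∈ M.closure (S \ {x})) :
    CyclicFlat M (M.closure S) := by
  refine ⟨closure_flat' M S, ?_⟩
  intro e he hcol
  have he' : e ∈ M.closure (M.closure S \ {e}) := by
    by_cases heS : e ∈ S
    · exact M.closure_subset_closure
        (Set.diff_subset_diff_left (M.subset_closure S hSE)) (hcyc e heS)
    · exact M.closure_subset_closure
        (Set.subset_diff_singleton (M.subset_closure S hSE) heS) he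
  obtain ⟨I, hI⟩ := M.exists_isBasis (M.closure S \ {e})
    (Set.diff_subset.trans (M.closure_subset_ground S))
  have hIbasis : M.IsBasis I (M.closure S) := by
    refine hI.indep.isBasis_of_subset_of_subset_closure
      (hI.subset.trans Set.diff_subset) ?_
    intro x hx
    by_cases hxe : x = e
    · subst hxe
      rw [hI.closure_eq_closure]
      exact he'
    · exact hI.subset_closure ⟨hx, hxe⟩
  have hbase : (M ↾ M.closure S).IsBase I := hIbasis.isBase_restrict
  exact (hI.subset (hcol I hbase)).2 rfl

end Helpers


open Classical in
lemma MCoPaper.tele [Fintype α] (M : Matroid α) (F : Finset (Finset α))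
    (hcf : ∀ Y ∈ F, CyclicFlat M ↑Y)
    (hfilter : ∀ A ∈ F, ∀ B : Finset α, CyclicFlat M ↑B → A ⊆ B → B ∈ F)
    (Z : Finset α) (hZ : Z ∈ F) :
    ∑ Y ∈ F.filter (fun Y => Z ⊆ Y), beta M Y = (rk M M.E : ℤ) - rk M ↑Z := by
  have hbeta : beta M Z = (rk M M.E : ℤ) - rk M ↑Z
      - ∑ Y ∈ F.filter (fun Y => Z ⊂ Y), beta M Y := by
    rw [beta, Finset.sum_attach _ (fun Y => beta M Y)]
    congr 2
    ext Y
    simp only [Finset.mem_filter, Finset.mem_univ, true_and]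
    constructor
    · rintro ⟨h1, h2⟩; exact ⟨hfilter Z hZ Y h1 h2.subset, h2⟩
    · rintro ⟨h1, h2⟩; exact ⟨hcf Y h1, h2⟩
  have hsplit : F.filter (fun Y => Z ⊆ Y) = insert Z (F.filter (fun Y => Z ⊂ Y)) := by
    ext Y
    simp only [Finset.mem_filter, Finset.mem_insert]
    constructor
    · rintro ⟨h1, h2⟩
      rcases eq_or_ne Y Z with rfl | hne
      · exact Or.inl rfl
      · exact Or.inr ⟨h1, Finset.ssubset_iff_subset_ne.2 ⟨h2, hne.symm⟩⟩
    · rintro (rfl | ⟨h1, h2⟩)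
      exacts [⟨hZ, Finset.Subset.refl _⟩, ⟨h1, h2.subset⟩]
  rw [hsplit, Finset.sum_insert (by simp [ssubset_irrefl]), hbeta]
  ring

open Classical in
lemma MCoPaper.key [Fintype α] (M : Matroid α) (F : Finset (Finset α))
    (hcf : ∀ Y ∈ F, CyclicFlat M ↑Y)
    (hfilter : ∀ A ∈ F, ∀ B : Finset α, CyclicFlat M ↑B → A ⊆ B → B ∈ F)
    (F' : Finset (Finset α)) (hsub : F' ⊆ F) (hne' : F'.Nonempty) :
    (rk M (⋃ Y ∈ F', (↑Y : Set α)) : ℤ)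
      = (rk M M.E : ℤ) - ∑ Y ∈ F.filter (fun Y => ∀ X ∈ F', X ⊆ Y), beta M Y := by
  set S : Set α := ⋃ Y ∈ F', (↑Y : Set α) with hS
  have hSE : S ⊆ M.E := Set.iUnion₂_subset fun X hX => (hcf X (hsub hX)).1.subset_ground
  have hcyc : ∀ x ∈ S, x ∈ M.closure (S \ {x}) := by
    intro x hx
    obtain ⟨X, hXF', hxX⟩ := Set.mem_iUnion₂.1 hx
    have h1 : x ∈ M.closure ((↑X : Set α) \ {x}) :=
      (hcf X (hsub hXF')).mem_closure_diff hxX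
    refine M.closure_subset_closure (Set.diff_subset_diff_left ?_) h1
    exact Set.subset_biUnion_of_mem (u := fun Y : Finset α => (↑Y : Set α)) hXF'
  have hcfS : CyclicFlat M (M.closure S) := closure_cyclicFlat hSE hcyc
  set Z0 : Finset α := (M.closure S).toFinset with hZ0def
  have hZ0 : (↑Z0 : Set α) = M.closure S := Set.coe_toFinset _
  have hZ0cf : CyclicFlat M ↑Z0 := by rw [hZ0]; exact hcfS
  have hsubcl : S ⊆ (↑Z0 : Set α) := by rw [hZ0]; exact M.subset_closure S hSE
  have hZ0F : Z0 ∈ F := by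
    obtain ⟨X0, hX0⟩ := hne'
    refine hfilter X0 (hsub hX0) Z0 hZ0cf ?_
    rw [← Finset.coe_subset]
    exact (Set.subset_biUnion_of_mem (u := fun Y : Finset α => (↑Y : Set α)) hX0).trans hsubcl
  have hfeq : F.filter (fun Y => ∀ X ∈ F', X ⊆ Y) = F.filter (fun Y => Z0 ⊆ Y) := by
    ext Y
    simp only [Finset.mem_filter, and_congr_right_iff]
    intro hY
    constructor
    · intro hall
      have hSY : S ⊆ (↑Y : Set α) := Set.iUnion₂_subset fun X hX => by
        exact_mod_cast Finset.coe_subset.2 (hall X hX)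
      have : M.closure S ⊆ (↑Y : Set α) := by
        have := M.closure_subset_closure hSY
        rwa [(hcf Y hY).1.closure] at this
      rw [← Finset.coe_subset, hZ0]
      exact this
    · intro hZY X hX
      rw [← Finset.coe_subset]
      exact ((Set.subset_biUnion_of_mem (u := fun Y : Finset α => (↑Y : Set α)) hX).trans hsubcl).trans
        (Finset.coe_subset.2 hZY)
  have hrk : rk M ↑Z0 = rk M S := by rw [hZ0]; exact rk_closure M S hSE
  rw [hfeq, tele M F hcf hfilter Z0 hZ0F, hrk]
  ring

open Classical in
theorem stmt12 [Fintype α] (M : Matroid α) (F : Finset (Finset α)) (hne : F.Nonempty)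
    (hcf : ∀ Y ∈ F, CyclicFlat M ↑Y)
    (hfilter : ∀ A ∈ F, ∀ B : Finset α, CyclicFlat M ↑B → A ⊆ B → B ∈ F) :
    ∑ Y ∈ F, beta M Y =
      (rk M M.E : ℤ) - ∑ F' ∈ F.powerset.filter (fun F' => F'.Nonempty),
        (-1) ^ (F'.card + 1) * (rk M (⋃ Y ∈ F', (↑Y : Set α)) : ℤ) := by
  classical
  have hkey : ∀ F' ∈ F.powerset.filter (fun F' => F'.Nonempty),
      (-1 : ℤ) ^ (F'.card + 1) * (rk M (⋃ Y ∈ F', (↑Y : Set α)) : ℤ)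
        = (-1 : ℤ) ^ (F'.card + 1) * (rk M M.E : ℤ)
          - (-1 : ℤ) ^ (F'.card + 1) * ∑ Y ∈ F.filter (fun Y => ∀ X ∈ F', X ⊆ Y), beta M Y := by
    intro F' hF'
    rw [Finset.mem_filter, Finset.mem_powerset] at hF'
    rw [key M F hcf hfilter F' hF'.1 hF'.2]
    ring
  rw [Finset.sum_congr rfl hkey, Finset.sum_sub_distrib, ← Finset.sum_mul,
    signsum F hne, one_mul]
  have hswap : ∑ F' ∈ F.powerset.filter (fun F' => F'.Nonempty),
      (-1 : ℤ) ^ (F'.card + 1) * ∑ Y ∈ F.filter (fun Y => ∀ X ∈ F', X ⊆ Y), beta M Y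
      = ∑ Y ∈ F, beta M Y := by
    have hstep : ∀ F' ∈ F.powerset.filter (fun F' => F'.Nonempty),
        (-1 : ℤ) ^ (F'.card + 1) * ∑ Y ∈ F.filter (fun Y => ∀ X ∈ F', X ⊆ Y), beta M Y
          = ∑ Y ∈ F, if (∀ X ∈ F', X ⊆ Y) then (-1 : ℤ) ^ (F'.card + 1) * beta M Y else 0 := by
      intro F' _
      rw [Finset.sum_filter, Finset.mul_sum]
      exact Finset.sum_congr rfl fun Y _ => by split <;> simp
    rw [Finset.sum_congr rfl hstep, Finset.sum_comm]
    refine Finset.sum_congr rfl fun Y hY => ?_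
    rw [← Finset.sum_filter]
    have hPY : (F.powerset.filter (fun F' => F'.Nonempty)).filter (fun F' => ∀ X ∈ F', X ⊆ Y)
        = (F.filter (fun Z => Z ⊆ Y)).powerset.filter (fun F' => F'.Nonempty) := by
      ext t
      simp only [Finset.mem_filter, Finset.mem_powerset]
      constructor
      · rintro ⟨⟨htF, htne⟩, hall⟩
        exact ⟨fun X hX => Finset.mem_filter.2 ⟨htF hX, hall X hX⟩, htne⟩
      · rintro ⟨hsub, htne⟩
        exact ⟨⟨fun X hX => (Finset.mem_filter.1 (hsub hX)).1, htne⟩,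
          fun X hX => (Finset.mem_filter.1 (hsub hX)).2⟩
    rw [hPY, ← Finset.sum_mul,
      signsum (F.filter (fun Z => Z ⊆ Y)) ⟨Y, Finset.mem_filter.2 ⟨hY, Finset.Subset.refl Y⟩⟩,
      one_mul]
  rw [hswap]
  ring
end

section
/- A matroid M is a fundamental transversal matroid if and only if Σ_{Y∈F} β(Y) = r(M) − r(⋂F) for every filter F in the lattice of cyclic flats of M, where β(X) = r(M) − r(X) − Σ_{Y cyclic flat, X ⊊ Y} β(Y) (with the convention that the intersection over the empty filter is E(M)). -/
open Matroid Set

variable {α : Type*}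

open MCoPaper


namespace MCoPaper
set_option linter.unusedSectionVars false

variable [Fintype α] {M : Matroid α} {X Y I J B F : Set α}

lemma indep_ncard_le_rk (hJ : M.Indep J) (hJX : J ⊆ X) : J.ncard ≤ rk M X := by
  apply le_csSup
  · refine ⟨Fintype.card α, ?_⟩
    rintro n ⟨I, _, _, rfl⟩
    simpa [Set.ncard_univ] using Set.ncard_le_ncard (Set.subset_univ I) Set.finite_univ
  · exact ⟨J, hJ, hJX, rfl⟩

lemma rk_eq_ncard (hI : M.IsBasis' I X) : rk M X = I.ncard := by
  refine le_antisymm ?_ (indep_ncard_le_rk hI.indep hI.subset)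
  have hne : {n | ∃ I, M.Indep I ∧ I ⊆ X ∧ I.ncard = n}.Nonempty :=
    ⟨0, ∅, M.empty_indep, Set.empty_subset X, by simp⟩
  apply csSup_le hne
  rintro n ⟨J, hJ, hJX, rfl⟩
  obtain ⟨J', hJ', hJsub⟩ := hJ.subset_isBasis'_of_subset hJX
  have h1 : J.ncard ≤ J'.ncard := Set.ncard_le_ncard hJsub (Set.toFinite J')
  have h2 : J'.ncard = I.ncard := by
    rw [Set.ncard_def, Set.ncard_def, hJ'.encard_eq_encard hI]
  omega

lemma rk_indep (hI : M.Indep I) : rk M I = I.ncard :=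
  rk_eq_ncard hI.isBasis_self.isBasis'

lemma rk_mono (h : X ⊆ Y) : rk M X ≤ rk M Y := by
  obtain ⟨I, hI⟩ := M.exists_isBasis' X
  rw [rk_eq_ncard hI]
  exact indep_ncard_le_rk hI.indep (hI.subset.trans h)

lemma rk_le_of_subset_closure (hX : X ⊆ M.closure Y) : rk M X ≤ rk M Y := by
  obtain ⟨I, hI⟩ := M.exists_isBasis' X
  obtain ⟨J, hJ⟩ := M.exists_isBasis' Y
  rw [rk_eq_ncard hI, rk_eq_ncard hJ]
  obtain ⟨I', hI', hII'⟩ := hI.indep.subset_isBasis_of_subset (hI.subset.trans hX)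
    (M.closure_subset_ground Y)
  have h1 : I.ncard ≤ I'.ncard := Set.ncard_le_ncard hII' (Set.toFinite I')
  have h2 : I'.ncard = J.ncard := by
    rw [Set.ncard_def, Set.ncard_def,
      hI'.isBasis'.encard_eq_encard hJ.isBasis_closure_right.isBasis']
  omega

lemma rk_empty : rk M (∅ : Set α) = 0 := by
  simp [rk_indep M.empty_indep]

lemma rk_ground_base (hB : M.IsBase B) : rk M M.E = B.ncard :=
  rk_eq_ncard hB.isBasis_ground.isBasis'

lemma spanning_of_rk_le (hXY : X ⊆ Y) (hY : Y ⊆ M.E) (hr : rk M Y ≤ rk M X) :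
    Y ⊆ M.closure X := by
  obtain ⟨I, hI⟩ := M.exists_isBasis' X
  obtain ⟨J, hJ, hIJ⟩ := hI.indep.subset_isBasis'_of_subset (hI.subset.trans hXY)
  have hIJ' : I = J := by
    apply Set.eq_of_subset_of_ncard_le hIJ _ (Set.toFinite J)
    rw [← rk_eq_ncard hI, ← rk_eq_ncard hJ]; exact hr
  have hbY := hJ.isBasis hY
  calc Y ⊆ M.closure J := hbY.subset_closure
  _ = M.closure I := by rw [hIJ']
  _ ⊆ M.closure X := by rw [hI.closure_eq_closure]

lemma rk_submod (M : Matroid α) (X Y : Set α) :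
    rk M (X ∪ Y) + rk M (X ∩ Y) ≤ rk M X + rk M Y := by
  obtain ⟨I, hI⟩ := M.exists_isBasis' (X ∩ Y)
  obtain ⟨J, hJ, hIJ⟩ := hI.indep.subset_isBasis'_of_subset
    (hI.subset.trans (inter_subset_left.trans subset_union_left))
  rw [rk_eq_ncard hI, rk_eq_ncard hJ]
  have h1 : (J ∩ X).ncard ≤ rk M X :=
    indep_ncard_le_rk (hJ.indep.subset inter_subset_left) inter_subset_right
  have h2 : (J ∩ Y).ncard ≤ rk M Y :=
    indep_ncard_le_rk (hJ.indep.subset inter_subset_left) inter_subset_right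
  have h3 : (J ∩ X).ncard + (J ∩ Y).ncard
      = ((J ∩ X) ∪ (J ∩ Y)).ncard + ((J ∩ X) ∩ (J ∩ Y)).ncard :=
    (Set.ncard_union_add_ncard_inter _ _ (Set.toFinite _) (Set.toFinite _)).symm
  have h4 : (J ∩ X) ∪ (J ∩ Y) = J := by
    rw [← Set.inter_union_distrib_left]; exact Set.inter_eq_self_of_subset_left hJ.subset
  have h5 : I ⊆ (J ∩ X) ∩ (J ∩ Y) := fun x hx =>
    ⟨⟨hIJ hx, (hI.subset hx).1⟩, hIJ hx, (hI.subset hx).2⟩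
  have h6 : I.ncard ≤ ((J ∩ X) ∩ (J ∩ Y)).ncard := Set.ncard_le_ncard h5 (Set.toFinite _)
  rw [h4] at h3
  omega




variable {M : Matroid α} {F X S : Set α} {e : α}

lemma flat_closure_s14 (M : Matroid α) (X : Set α) : M.IsFlat (M.closure X) := by
  rw [Matroid.closure_def, sInter_eq_iInter]
  haveI : Nonempty ↑{F | M.IsFlat F ∧ X ∩ M.E ⊆ F} := ⟨⟨M.E, M.ground_isFlat, inter_subset_right⟩⟩
  exact Matroid.IsFlat.iInter (fun F => F.2.1)

lemma CyclicFlat.mem_closure_diff_s14 (h : CyclicFlat M F) (he : e ∈ F) :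
    e ∈ M.closure (F \ {e}) := by
  have h2 := h.2 e he
  rw [Coloop] at h2
  push_neg at h2
  obtain ⟨B, hB, heB⟩ := h2
  rw [Matroid.isBase_restrict_iff'] at hB
  have hBF : B ⊆ F \ {e} := subset_diff_singleton hB.subset heB
  have : F ⊆ M.closure B := (hB.isBasis h.1.subset_ground).subset_closure
  exact (this.trans (M.closure_subset_closure hBF)) he

lemma cyclicFlat_of_forall (hF : M.IsFlat F) (h : ∀ e ∈ F, e ∈ M.closure (F \ {e})) :
    CyclicFlat M F := by
  refine ⟨hF, fun e he hco => ?_⟩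
  obtain ⟨B, hB⟩ := M.exists_isBasis' (F \ {e})
  have hFsub : F \ {e} ⊆ M.E := diff_subset.trans hF.subset_ground
  have hFcl : F ⊆ M.closure B := by
    rw [hB.closure_eq_closure]
    intro x hx
    by_cases hxe : x = e
    · subst hxe; exact h x hx
    · exact M.subset_closure _ hFsub ⟨hx, hxe⟩
  have hBF : M.IsBasis B F :=
    hB.indep.isBasis_of_subset_of_subset_closure (hB.subset.trans diff_subset) hFcl
  have := hco B hBF.restrict_isBase
  exact (hB.subset this).2 rfl

lemma cyclicFlat_closure_sUnion {S : Set (Set α)} (hS : ∀ F ∈ S, CyclicFlat M F)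
    (hSE : ∀ F ∈ S, F ⊆ M.E) : CyclicFlat M (M.closure (⋃₀ S)) := by
  have hUE : ⋃₀ S ⊆ M.E := sUnion_subset hSE
  refine cyclicFlat_of_forall (flat_closure_s14 M _) (fun e he => ?_)
  by_cases heU : e ∈ ⋃₀ S
  · obtain ⟨F, hFS, heF⟩ := heU
    have h1 : e ∈ M.closure (F \ {e}) := (hS F hFS).mem_closure_diff_s14 heF
    refine M.closure_subset_closure ?_ h1
    intro x hx
    exact ⟨M.subset_closure _ hUE (Set.subset_sUnion_of_mem hFS hx.1), hx.2⟩
  · have : ⋃₀ S ⊆ M.closure (⋃₀ S) \ {e} := by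
      intro x hx
      exact ⟨M.subset_closure _ hUE hx, fun hxe => heU (hxe ▸ hx)⟩
    exact M.closure_subset_closure this he

lemma cyclicFlat_closure_empty (M : Matroid α) : CyclicFlat M (M.closure ∅) := by
  have := cyclicFlat_closure_sUnion (M := M) (S := ∅) (by simp) (by simp)
  simpa using this

lemma exists_min_dep [Fintype α] (hS : S ⊆ M.E) (h : ¬ M.Indep S) :
    ∃ C, C ⊆ S ∧ ¬ M.Indep C ∧ ∀ x ∈ C, M.Indep (C \ {x}) := by
  classical
  obtain ⟨n, hn⟩ : ∃ n, S.ncard = n := ⟨_, rfl⟩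
  induction n using Nat.strong_induction_on generalizing S with
  | _ n IH =>
    by_cases hall : ∀ x ∈ S, M.Indep (S \ {x})
    · exact ⟨S, subset_rfl, h, hall⟩
    · push_neg at hall
      obtain ⟨x, hxS, hx⟩ := hall
      obtain ⟨C, hCsub, hC⟩ := IH (S \ {x}).ncard
        (by
          rw [← hn]
          exact Set.ncard_diff_singleton_lt_of_mem hxS (Set.toFinite S))
        (diff_subset.trans hS) hx rfl
      exact ⟨C, hCsub.trans diff_subset, hC⟩

lemma cyclicFlat_closure_min_dep {C : Set α} (hCE : C ⊆ M.E) (hdep : ¬ M.Indep C)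
    (hmin : ∀ x ∈ C, M.Indep (C \ {x})) : CyclicFlat M (M.closure C) := by
  refine cyclicFlat_of_forall (flat_closure_s14 M _) (fun e he => ?_)
  by_cases heC : e ∈ C
  · have h1 : e ∈ M.closure (C \ {e}) := by
      have hI : M.Indep (C \ {e}) := hmin e heC
      rw [hI.mem_closure_iff_of_notMem (by simp)]
      rw [Matroid.Dep]
      constructor
      · intro hi
        apply hdep
        have : insert e (C \ {e}) = C := by
          ext x; by_cases hx : x = e <;> simp [hx, heC]
        rwa [this] at hi
      · intro x hx
        rcases hx with rfl | hx
        · exact hCE heC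
        · exact hCE hx.1
    refine M.closure_subset_closure ?_ h1
    intro x hx
    exact ⟨M.subset_closure _ hCE hx.1, hx.2⟩
  · have : C ⊆ M.closure C \ {e} := fun x hx =>
      ⟨M.subset_closure _ hCE hx, fun hxe => heC (hxe ▸ hx)⟩
    exact M.closure_subset_closure this he




variable [Fintype α] {M : Matroid α}

set_option linter.unusedSectionVars false

open Classical

lemma beta_spec (M : Matroid α) (X : Finset α) :
    beta M X = (rk M M.E : ℤ) - rk M ↑X -
      ∑ Y ∈ Finset.univ.filter (fun Y : Finset α => CyclicFlat M ↑Y ∧ X ⊂ Y), beta M Y := by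
  rw [beta, Finset.sum_attach]

open Classical in
noncomputable def Zf (M : Matroid α) : Finset (Finset α) :=
  Finset.univ.filter (fun Y : Finset α => CyclicFlat M ↑Y)

lemma mem_Zf {Y : Finset α} : Y ∈ Zf M ↔ CyclicFlat M ↑Y := by
  simp [Zf]

def XK (M : Matroid α) (K : Finset (Finset α)) : Set α :=
  M.E ∩ ⋂ Y ∈ K, (↑Y : Set α)

lemma mem_XK {K : Finset (Finset α)} {x : α} :
    x ∈ XK M K ↔ x ∈ M.E ∧ ∀ Y ∈ K, x ∈ Y := by
  simp [XK]

lemma XK_subset_ground (K : Finset (Finset α)) : XK M K ⊆ M.E := inter_subset_left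

lemma XK_subset_mem {K : Finset (Finset α)} {Y : Finset α} (hY : Y ∈ K) :
    XK M K ⊆ (↑Y : Set α) := by
  intro x hx; exact (mem_XK.mp hx).2 Y hY

lemma XK_anti {K K' : Finset (Finset α)} (h : K ⊆ K') : XK M K' ⊆ XK M K := by
  intro x hx
  rw [mem_XK] at hx ⊢
  exact ⟨hx.1, fun Y hY => hx.2 Y (h hY)⟩

lemma XK_insert {K : Finset (Finset α)} {Y : Finset α} :
    XK M (insert Y K) = XK M K ∩ (↑Y : Set α) := by
  ext x
  simp only [mem_XK, Finset.mem_insert, mem_inter_iff]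
  constructor
  · rintro ⟨hE, h⟩
    exact ⟨⟨hE, fun Z hZ => h Z (Or.inr hZ)⟩, h Y (Or.inl rfl)⟩
  · rintro ⟨⟨hE, h⟩, hY⟩
    refine ⟨hE, fun Z hZ => ?_⟩
    rcases hZ with rfl | hZ
    · exact hY
    · exact h Z hZ

lemma XK_empty : XK M (∅ : Finset (Finset α)) = M.E := by
  simp [XK]

lemma card_fiber_sum (s : Finset α) (f : α → Finset α) (T : Finset (Finset α)) :
    ∑ Z ∈ T, (s.filter (fun b => f b = Z)).card = (s.filter (fun b => f b ∈ T)).card := by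
  rw [Finset.card_eq_sum_card_fiberwise
    (f := f) (s := s.filter (fun b => f b ∈ T)) (t := T) (fun x hx => (Finset.mem_filter.mp hx).2)]
  apply Finset.sum_congr rfl
  intro Z hZ
  congr 1
  ext b
  simp only [Finset.mem_filter]
  constructor
  · rintro ⟨hb, rfl⟩; exact ⟨⟨hb, hZ⟩, rfl⟩
  · rintro ⟨⟨hb, _⟩, rfl⟩; exact ⟨hb, rfl⟩


/-! ### Forward direction -/

lemma cyclicFlat_closure_biUnion {P : Finset (Finset α)} (h : ∀ Z ∈ P, CyclicFlat M (↑Z : Set α)) :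
    CyclicFlat M (M.closure (⋃ Z ∈ P, (↑Z : Set α))) := by
  have himg : CyclicFlat M (M.closure (⋃₀ ((fun Z : Finset α => (↑Z : Set α)) '' ↑P))) := by
    apply cyclicFlat_closure_sUnion
    · rintro F ⟨Z, hZ, rfl⟩; exact h Z hZ
    · rintro F ⟨Z, hZ, rfl⟩; exact (h Z hZ).1.subset_ground
  rwa [Set.sUnion_image] at himg

lemma fund_rk_eq {B : Set α} (hB : FundBasis M B) {Y : Set α} (hY : CyclicFlat M Y) :
    rk M Y = (B ∩ Y).ncard := by
  refine le_antisymm ?_ (indep_ncard_le_rk (hB.1.indep.subset inter_subset_left)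
    inter_subset_right)
  have h1 : rk M Y ≤ rk M (B ∩ Y) := rk_le_of_subset_closure (hB.2 Y hY)
  rwa [rk_indep (hB.1.indep.subset inter_subset_left)] at h1

lemma fund_rk_XK {B : Set α} (hB : FundBasis M B) (K : Finset (Finset α))
    (hK : ∀ Y ∈ K, CyclicFlat M (↑Y : Set α)) :
    rk M (XK M K) = (B ∩ XK M K).ncard := by
  classical
  induction K using Finset.induction_on with
  | empty =>
    rw [XK_empty, rk_ground_base hB.1,
      Set.inter_eq_self_of_subset_left hB.1.subset_ground]
  | @insert Y K hYK IH =>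
    have hKc : ∀ Z ∈ K, CyclicFlat M (↑Z : Set α) := fun Z hZ => hK Z (Finset.mem_insert_of_mem hZ)
    have hYc : CyclicFlat M (↑Y : Set α) := hK Y (Finset.mem_insert_self Y K)
    have IH' := IH hKc
    rw [XK_insert]
    set T := XK M K with hT
    have h2 : rk M (↑Y : Set α) = (B ∩ ↑Y).ncard := fund_rk_eq hB hYc
    have h3 : (B ∩ (T ∪ ↑Y)).ncard ≤ rk M (T ∪ ↑Y) :=
      indep_ncard_le_rk (hB.1.indep.subset inter_subset_left) inter_subset_right
    have h4 := rk_submod M T (↑Y : Set α)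
    have h5 : (B ∩ T).ncard + (B ∩ ↑Y).ncard
        = ((B ∩ T) ∪ (B ∩ ↑Y)).ncard + ((B ∩ T) ∩ (B ∩ ↑Y)).ncard :=
      (Set.ncard_union_add_ncard_inter _ _ (Set.toFinite _) (Set.toFinite _)).symm
    have e1 : (B ∩ T) ∪ (B ∩ ↑Y) = B ∩ (T ∪ ↑Y) := (Set.inter_union_distrib_left _ _ _).symm
    have e2 : (B ∩ T) ∩ (B ∩ ↑Y) = B ∩ (T ∩ ↑Y) := by
      ext x; simp only [mem_inter_iff]; tauto
    rw [e1, e2] at h5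
    have h6 : (B ∩ (T ∩ ↑Y)).ncard ≤ rk M (T ∩ ↑Y) :=
      indep_ncard_le_rk (hB.1.indep.subset inter_subset_left) inter_subset_right
    omega

lemma forward_direction (M : Matroid α) (h : FundTransversal M) :
    ∀ F : Finset (Finset α), (∀ Y ∈ F, CyclicFlat M ↑Y) →
      (∀ A ∈ F, ∀ B : Finset α, CyclicFlat M ↑B → A ⊆ B → B ∈ F) →
      ∑ Y ∈ F, beta M Y =
        (rk M M.E : ℤ) - rk M (M.E ∩ ⋂ Y ∈ F, (↑Y : Set α)) := by
  classical
  obtain ⟨B, hB⟩ := h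
  set Bf : Finset α := (Set.toFinite B).toFinset with hBf
  have hBfc : (↑Bf : Set α) = B := Set.Finite.coe_toFinset _
  have hmemBf : ∀ x, x ∈ Bf ↔ x ∈ B := fun x => (Set.toFinite B).mem_toFinset
  set Pb : α → Finset (Finset α) := fun b => (Zf M).filter (fun Z => b ∉ Z) with hPb
  set fb : α → Finset α :=
    fun b => (Set.toFinite (M.closure (⋃ Z ∈ Pb b, (↑Z : Set α)))).toFinset with hfb
  have hfbc : ∀ b, (↑(fb b) : Set α) = M.closure (⋃ Z ∈ Pb b, (↑Z : Set α)) :=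
    fun b => Set.Finite.coe_toFinset _
  have hfb_cyclic : ∀ b, CyclicFlat M (↑(fb b) : Set α) := by
    intro b
    rw [hfbc]
    exact cyclicFlat_closure_biUnion (fun Z hZ => mem_Zf.mp (Finset.mem_filter.mp hZ).1)
  -- b ∉ fb b for b ∈ B
  have hfb_not_mem : ∀ b ∈ B, b ∉ fb b := by
    intro b hb hmem
    have hUcl : (⋃ Z ∈ Pb b, (↑Z : Set α)) ⊆ M.closure (B \ {b}) := by
      refine Set.iUnion₂_subset (fun Z hZ => ?_)
      have hZc := mem_Zf.mp (Finset.mem_filter.mp hZ).1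
      have hbZ := (Finset.mem_filter.mp hZ).2
      refine (hB.2 _ hZc).trans (M.closure_subset_closure ?_)
      intro x hx
      refine ⟨hx.1, fun hxb => hbZ ?_⟩
      have hxb' : x = b := hxb
      rw [← hxb']
      exact Finset.mem_coe.mp hx.2
    have h2 : M.closure (⋃ Z ∈ Pb b, (↑Z : Set α)) ⊆ M.closure (B \ {b}) :=
      M.closure_subset_closure_of_subset_closure hUcl
    have h3 : b ∈ M.closure (⋃ Z ∈ Pb b, (↑Z : Set α)) := by
      rw [← hfbc]; exact hmem
    exact hB.1.indep.notMem_closure_sdiff_of_mem hb (h2 h3)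
  have hUE : ∀ b, (⋃ Z ∈ Pb b, (↑Z : Set α)) ⊆ M.E := by
    intro b
    refine Set.iUnion₂_subset (fun Z hZ => ?_)
    exact (mem_Zf.mp (Finset.mem_filter.mp hZ).1).1.subset_ground
  have hfb_iff : ∀ b ∈ B, ∀ Y ∈ Zf M, (b ∉ Y ↔ Y ⊆ fb b) := by
    intro b hb Y hY
    constructor
    · intro hbY
      have hYP : Y ∈ Pb b := Finset.mem_filter.mpr ⟨hY, hbY⟩
      intro x hx
      have : (x : α) ∈ (⋃ Z ∈ Pb b, (↑Z : Set α)) :=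
        Set.mem_biUnion hYP hx
      have : (x : α) ∈ M.closure (⋃ Z ∈ Pb b, (↑Z : Set α)) :=
        M.subset_closure _ (hUE b) this
      rw [← hfbc] at this
      exact this
    · intro hYfb hbY
      exact hfb_not_mem b hb (hYfb hbY)
  -- cardinality facts
  have hrkE : (rk M M.E : ℤ) = Bf.card := by
    have : rk M M.E = Bf.card := by
      rw [rk_ground_base hB.1, ← hBfc, Set.ncard_coe_finset]
    exact_mod_cast this
  have hrkY : ∀ Y ∈ Zf M, (rk M (↑Y : Set α) : ℤ) = (Bf.filter (fun b => b ∈ Y)).card := by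
    intro Y hY
    have : rk M (↑Y : Set α) = (Bf.filter (fun b => b ∈ Y)).card := by
      rw [fund_rk_eq hB (mem_Zf.mp hY), ← Set.ncard_coe_finset]
      congr 1
      ext x
      simp only [Finset.coe_filter, mem_setOf_eq, mem_inter_iff, Finset.mem_coe, hmemBf]
    exact_mod_cast this
  -- counting partition
  have hcount : ∀ Y ∈ Zf M, (Bf.card : ℤ) - (Bf.filter (fun b => b ∈ Y)).card
      = (Bf.filter (fun b => Y ⊂ fb b)).card + (Bf.filter (fun b => fb b = Y)).card := by
    intro Y hY
    have hpart : (Bf.filter (fun b => b ∈ Y)).card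
        + (Bf.filter (fun b => ¬ b ∈ Y)).card = Bf.card :=
      Finset.card_filter_add_card_filter_not (p := fun b => b ∈ Y)
    have hpart2 : ((Bf.filter (fun b => ¬ b ∈ Y)).filter (fun b => fb b = Y)).card
        + ((Bf.filter (fun b => ¬ b ∈ Y)).filter (fun b => ¬ fb b = Y)).card
        = (Bf.filter (fun b => ¬ b ∈ Y)).card :=
      Finset.card_filter_add_card_filter_not (p := fun b => fb b = Y)
    have e1 : (Bf.filter (fun b => ¬ b ∈ Y)).filter (fun b => fb b = Y)
        = Bf.filter (fun b => fb b = Y) := by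
      rw [Finset.filter_filter]
      apply Finset.filter_congr
      intro b hb
      have hbB : b ∈ B := (hmemBf b).mp hb
      constructor
      · rintro ⟨-, h⟩; exact h
      · intro h
        refine ⟨fun hbY => ?_, h⟩
        exact hfb_not_mem b hbB (h ▸ hbY)
    have e2 : (Bf.filter (fun b => ¬ b ∈ Y)).filter (fun b => ¬ fb b = Y)
        = Bf.filter (fun b => Y ⊂ fb b) := by
      rw [Finset.filter_filter]
      apply Finset.filter_congr
      intro b hb
      have hbB : b ∈ B := (hmemBf b).mp hb
      constructor
      · rintro ⟨hbY, hne⟩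
        rw [Finset.ssubset_iff_subset_ne]
        exact ⟨(hfb_iff b hbB Y hY).mp hbY, fun he => hne he.symm⟩
      · intro hss
        refine ⟨fun hbY => ?_, fun he => ?_⟩
        · exact hfb_not_mem b hbB (hss.subset hbY)
        · exact (he ▸ hss).ne rfl
    rw [e1, e2] at hpart2
    omega
  -- the fiber formula
  have key : ∀ n (Y : Finset α), CyclicFlat M (↑Y : Set α) → Fintype.card α - Y.card ≤ n →
      beta M Y = ((Bf.filter (fun b => fb b = Y)).card : ℤ) := by
    intro n
    induction n with
    | zero =>
      intro Y hY hcard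
      have hempty : Finset.univ.filter (fun Z : Finset α => CyclicFlat M ↑Z ∧ Y ⊂ Z) = ∅ := by
        rw [Finset.filter_eq_empty_iff]
        rintro Z - ⟨-, hYZ⟩
        have h1 := Finset.card_lt_card hYZ
        have h2 := Z.card_le_univ
        omega
      have hfiber0 : (Bf.filter (fun b => Y ⊂ fb b)).card = 0 := by
        rw [Finset.card_eq_zero, Finset.filter_eq_empty_iff]
        intro b hb hYfb
        have h1 := Finset.card_lt_card hYfb
        have h2 := (fb b).card_le_univ
        omega
      have h3 := hcount Y (mem_Zf.mpr hY)
      rw [beta_spec, hempty, Finset.sum_empty, hrkE, hrkY Y (mem_Zf.mpr hY)]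
      omega
    | succ n IH =>
      intro Y hY hcard
      have hsum : ∑ Z ∈ Finset.univ.filter (fun Z : Finset α => CyclicFlat M ↑Z ∧ Y ⊂ Z),
          beta M Z
          = ∑ Z ∈ Finset.univ.filter (fun Z : Finset α => CyclicFlat M ↑Z ∧ Y ⊂ Z),
            ((Bf.filter (fun b => fb b = Z)).card : ℤ) := by
        apply Finset.sum_congr rfl
        intro Z hZ
        rw [Finset.mem_filter] at hZ
        apply IH Z hZ.2.1
        have h1 := Finset.card_lt_card hZ.2.2
        omega
      have hsum2 : ∑ Z ∈ Finset.univ.filter (fun Z : Finset α => CyclicFlat M ↑Z ∧ Y ⊂ Z),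
          ((Bf.filter (fun b => fb b = Z)).card : ℤ)
          = ((Bf.filter (fun b => Y ⊂ fb b)).card : ℤ) := by
        have hc := card_fiber_sum Bf fb
          (Finset.univ.filter (fun Z : Finset α => CyclicFlat M ↑Z ∧ Y ⊂ Z))
        have hTeq : Bf.filter
            (fun b => fb b ∈ Finset.univ.filter (fun Z : Finset α => CyclicFlat M ↑Z ∧ Y ⊂ Z))
            = Bf.filter (fun b => Y ⊂ fb b) := by
          apply Finset.filter_congr
          intro b hb
          simp only [Finset.mem_filter, Finset.mem_univ, true_and]
          constructor
          · rintro ⟨-, h⟩; exact h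
          · intro h; exact ⟨hfb_cyclic b, h⟩
        rw [hTeq] at hc
        exact_mod_cast hc
      have h3 := hcount Y (mem_Zf.mpr hY)
      rw [beta_spec, hsum, hsum2, hrkE, hrkY Y (mem_Zf.mpr hY)]
      omega
  -- conclusion
  intro F hF1 hF2
  have hFZ : F ⊆ Zf M := fun Y hY => mem_Zf.mpr (hF1 Y hY)
  have hsum : ∑ Y ∈ F, beta M Y = ∑ Y ∈ F, ((Bf.filter (fun b => fb b = Y)).card : ℤ) :=
    Finset.sum_congr rfl (fun Y hY => key (Fintype.card α) Y (hF1 Y hY) (by omega))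
  have hsum2 : ∑ Y ∈ F, ((Bf.filter (fun b => fb b = Y)).card : ℤ)
      = ((Bf.filter (fun b => fb b ∈ F)).card : ℤ) := by
    exact_mod_cast card_fiber_sum Bf fb F
  have hpart : (Bf.filter (fun b => fb b ∈ F)).card
      + (Bf.filter (fun b => ¬ fb b ∈ F)).card = Bf.card :=
    Finset.card_filter_add_card_filter_not (p := fun b => fb b ∈ F)
  have e3 : Bf.filter (fun b => ¬ fb b ∈ F) = Bf.filter (fun b => ∀ Y ∈ F, b ∈ Y) := by
    apply Finset.filter_congr
    intro b hb
    have hbB : b ∈ B := (hmemBf b).mp hb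
    constructor
    · intro hnF Y hYF
      by_contra hbY
      have hYfb : Y ⊆ fb b := (hfb_iff b hbB Y (hFZ hYF)).mp hbY
      exact hnF (hF2 Y hYF (fb b) (hfb_cyclic b) hYfb)
    · intro hall hmemF
      exact hfb_not_mem b hbB (hall (fb b) hmemF)
  have e4 := congrArg Finset.card e3
  have hRHS : rk M (M.E ∩ ⋂ Y ∈ F, (↑Y : Set α))
      = (Bf.filter (fun b => ∀ Y ∈ F, b ∈ Y)).card := by
    have h1 : rk M (XK M F) = (B ∩ XK M F).ncard := fund_rk_XK hB F hF1
    have h2 : B ∩ XK M F = ↑(Bf.filter (fun b => ∀ Y ∈ F, b ∈ Y)) := by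
      ext x
      simp only [Finset.coe_filter, mem_setOf_eq, mem_inter_iff, Finset.mem_coe, hmemBf, mem_XK]
      constructor
      · rintro ⟨hxB, -, h⟩; exact ⟨hxB, h⟩
      · rintro ⟨hxB, h⟩; exact ⟨hxB, hB.1.subset_ground hxB, h⟩
    rw [show M.E ∩ ⋂ Y ∈ F, (↑Y : Set α) = XK M F from rfl, h1, h2, Set.ncard_coe_finset]
  rw [hsum, hsum2, hrkE, hRHS]
  omega

/-! ### Converse direction -/

def Hyp (M : Matroid α) : Prop :=
  ∀ F : Finset (Finset α), (∀ Y ∈ F, CyclicFlat M ↑Y) →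
    (∀ A ∈ F, ∀ B : Finset α, CyclicFlat M ↑B → A ⊆ B → B ∈ F) →
    ∑ Y ∈ F, beta M Y =
      (rk M M.E : ℤ) - rk M (M.E ∩ ⋂ Y ∈ F, (↑Y : Set α))

lemma Hyp.eval (hH : Hyp M) {K : Finset (Finset α)} (h1 : ∀ Y ∈ K, CyclicFlat M ↑Y)
    (h2 : ∀ A ∈ K, ∀ B : Finset α, CyclicFlat M ↑B → A ⊆ B → B ∈ K) :
    ∑ Y ∈ K, beta M Y = (rk M M.E : ℤ) - rk M (XK M K) :=
  hH K h1 h2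

lemma beta_spec2 (M : Matroid α) (X : Finset α) :
    beta M X = (rk M M.E : ℤ) - rk M ↑X -
      ∑ Y ∈ (Zf M).filter (fun Z => X ⊂ Z), beta M Y := by
  rw [beta_spec]
  congr 2
  ext Z
  simp [Zf, Finset.mem_filter]

lemma principal_filter_eq {Y : Finset α} (hY : Y ∈ Zf M) :
    (Zf M).filter (fun Z => Y ⊆ Z) = insert Y ((Zf M).filter (fun Z => Y ⊂ Z)) := by
  ext Z
  simp only [Finset.mem_filter, Finset.mem_insert]
  constructor
  · rintro ⟨hZf, hYZ⟩
    rcases eq_or_ne Z Y with rfl | hne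
    · exact Or.inl rfl
    · exact Or.inr ⟨hZf, ssubset_of_subset_of_ne hYZ (Ne.symm hne)⟩
  · rintro (rfl | ⟨hZf, hYZ⟩)
    · exact ⟨hY, subset_rfl⟩
    · exact ⟨hZf, hYZ.subset⟩

lemma principal_eq {Y : Finset α} (hY : Y ∈ Zf M) :
    ∑ Z ∈ (Zf M).filter (fun Z => Y ⊆ Z), beta M Z
      = (rk M M.E : ℤ) - rk M (↑Y : Set α) := by
  rw [principal_filter_eq hY,
    Finset.sum_insert (fun h => ssubset_irrefl Y (Finset.mem_filter.mp h).2), beta_spec2]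
  ring

lemma beta_nonneg (hH : Hyp M) {Y : Finset α} (hY : Y ∈ Zf M) : 0 ≤ beta M Y := by
  have hfilt := hH.eval (K := (Zf M).filter (fun Z => Y ⊂ Z))
    (fun Z hZ => mem_Zf.mp (Finset.mem_filter.mp hZ).1)
    (fun A hA B hBc hAB => Finset.mem_filter.mpr
      ⟨mem_Zf.mpr hBc, (Finset.mem_filter.mp hA).2.trans_subset hAB⟩)
  have hb := beta_spec2 M Y
  rw [hfilt] at hb
  have hYE : (↑Y : Set α) ⊆ M.E := (mem_Zf.mp hY).1.subset_ground
  have hsub : (↑Y : Set α) ⊆ XK M ((Zf M).filter (fun Z => Y ⊂ Z)) := by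
    intro x hx
    rw [mem_XK]
    exact ⟨hYE hx, fun Z hZ => (Finset.mem_filter.mp hZ).2.subset hx⟩
  have hmono := rk_mono (M := M) hsub
  omega

lemma NS_filt {Y : Finset α} :
    (∀ Z ∈ (Zf M).filter (fun Z => ¬ Z ⊆ Y), CyclicFlat M (↑Z : Set α)) ∧
      (∀ A ∈ (Zf M).filter (fun Z => ¬ Z ⊆ Y), ∀ B : Finset α, CyclicFlat M ↑B → A ⊆ B →
        B ∈ (Zf M).filter (fun Z => ¬ Z ⊆ Y)) := by
  constructor
  · exact fun Z hZ => mem_Zf.mp (Finset.mem_filter.mp hZ).1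
  · intro A hA B hBc hAB
    rw [Finset.mem_filter] at hA ⊢
    exact ⟨mem_Zf.mpr hBc, fun hBY => hA.2 (hAB.trans hBY)⟩

lemma NS'_eq {Y : Finset α} (hY : Y ∈ Zf M) :
    (Zf M).filter (fun Z => ¬ Z ⊆ Y ∨ Z = Y)
      = insert Y ((Zf M).filter (fun Z => ¬ Z ⊆ Y)) := by
  ext Z
  simp only [Finset.mem_filter, Finset.mem_insert]
  constructor
  · rintro ⟨hZf, h | rfl⟩
    · exact Or.inr ⟨hZf, h⟩
    · exact Or.inl rfl
  · rintro (rfl | ⟨hZf, h⟩)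
    · exact ⟨hY, Or.inr rfl⟩
    · exact ⟨hZf, Or.inl h⟩

/-- The key rank inequality: `r(Y ∪ D(Y)) ≥ r(Y) + β(Y)`. -/
lemma star (hH : Hyp M) {Y : Finset α} (hY : Y ∈ Zf M) :
    (rk M (↑Y : Set α) : ℤ) + beta M Y
      ≤ (rk M ((↑Y : Set α) ∪ XK M ((Zf M).filter (fun Z => ¬ Z ⊆ Y))) : ℤ) := by
  classical
  set D : Set α := XK M ((Zf M).filter (fun Z => ¬ Z ⊆ Y)) with hD
  have hYc : CyclicFlat M (↑Y : Set α) := mem_Zf.mp hY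
  have hYE : (↑Y : Set α) ⊆ M.E := hYc.1.subset_ground
  have hDE : D ⊆ M.E := XK_subset_ground _
  -- ranks of D and D ∩ Y from the hypothesis
  have hrD := hH.eval (K := (Zf M).filter (fun Z => ¬ Z ⊆ Y)) NS_filt.1 NS_filt.2
  have hfilt' : (∀ Z ∈ (Zf M).filter (fun Z => ¬ Z ⊆ Y ∨ Z = Y), CyclicFlat M (↑Z : Set α)) ∧
      (∀ A ∈ (Zf M).filter (fun Z => ¬ Z ⊆ Y ∨ Z = Y), ∀ B : Finset α, CyclicFlat M ↑B →
        A ⊆ B → B ∈ (Zf M).filter (fun Z => ¬ Z ⊆ Y ∨ Z = Y)) := by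
    constructor
    · exact fun Z hZ => mem_Zf.mp (Finset.mem_filter.mp hZ).1
    · intro A hA B hBc hAB
      rw [Finset.mem_filter] at hA ⊢
      refine ⟨mem_Zf.mpr hBc, ?_⟩
      rcases hA.2 with h | rfl
      · exact Or.inl (fun hBY => h (hAB.trans hBY))
      · rcases eq_or_ne B A with rfl | hne
        · exact Or.inr rfl
        · exact Or.inl (fun hBA => hne (Finset.Subset.antisymm hBA hAB))
  have hrDY := hH.eval (K := (Zf M).filter (fun Z => ¬ Z ⊆ Y ∨ Z = Y)) hfilt'.1 hfilt'.2
  rw [NS'_eq hY] at hrDY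
  rw [Finset.sum_insert (by simp)] at hrDY
  have hXKins : XK M (insert Y ((Zf M).filter (fun Z => ¬ Z ⊆ Y))) = D ∩ (↑Y : Set α) :=
    XK_insert
  rw [hXKins] at hrDY
  -- β(Y) = rk D - rk (D ∩ Y)
  have hbetaDY : (rk M D : ℤ) - rk M (D ∩ (↑Y : Set α)) = beta M Y := by
    rw [← hD] at hrD
    omega
  -- choose bases
  obtain ⟨I₀, hI₀⟩ := M.exists_isBasis' (D ∩ (↑Y : Set α))
  obtain ⟨I₂, hI₂, hI₀I₂⟩ := hI₀.indep.subset_isBasis'_of_subset (hI₀.subset.trans inter_subset_left)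
  obtain ⟨IY, hIY, hI₀IY⟩ := hI₀.indep.subset_isBasis'_of_subset (hI₀.subset.trans inter_subset_right)
  have hclI₀ : D ∩ (↑Y : Set α) ⊆ M.closure I₀ := by
    rw [hI₀.closure_eq_closure]
    exact M.subset_closure _ (inter_subset_left.trans hDE)
  have hIYI₂ : IY ∩ I₂ = I₀ := by
    apply Set.Subset.antisymm
    · intro x hx
      by_contra hxI₀
      have hxDY : x ∈ D ∩ (↑Y : Set α) := ⟨hI₂.subset hx.2, hIY.subset hx.1⟩
      have hxcl : x ∈ M.closure (I₂ \ {x}) :=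
        M.closure_subset_closure (subset_diff_singleton hI₀I₂ hxI₀) (hclI₀ hxDY)
      exact hI₂.indep.notMem_closure_sdiff_of_mem hx.2 hxcl
    · exact Set.subset_inter hI₀IY hI₀I₂
  have hcards : (IY ∪ I₂).ncard + I₀.ncard = IY.ncard + I₂.ncard := by
    rw [← hIYI₂]
    exact Set.ncard_union_add_ncard_inter _ _ (Set.toFinite _) (Set.toFinite _)
  have hrI₀ : I₀.ncard = rk M (D ∩ (↑Y : Set α)) := (rk_eq_ncard hI₀).symm
  have hrI₂ : I₂.ncard = rk M D := (rk_eq_ncard hI₂).symm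
  have hrIY : IY.ncard = rk M (↑Y : Set α) := (rk_eq_ncard hIY).symm
  have hSsub : IY ∪ I₂ ⊆ (↑Y : Set α) ∪ D := Set.union_subset_union hIY.subset hI₂.subset
  by_cases hSind : M.Indep (IY ∪ I₂)
  · -- independent: direct count
    have h1 : (IY ∪ I₂).ncard ≤ rk M ((↑Y : Set α) ∪ D) := indep_ncard_le_rk hSind hSsub
    omega
  · -- a circuit appears
    obtain ⟨C, hCS, hCdep, hCmin⟩ := exists_min_dep
      (hSsub.trans (Set.union_subset hYE hDE)) hSind
    have hCE : C ⊆ M.E := hCS.trans (hSsub.trans (Set.union_subset hYE hDE))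
    have hZ'c : CyclicFlat M (M.closure C) := cyclicFlat_closure_min_dep hCE hCdep hCmin
    have hCcl : C ⊆ M.closure C := M.subset_closure _ hCE
    -- C is not contained in IY
    have hCnotIY : ¬ C ⊆ IY := fun h => hCdep (hIY.indep.subset h)
    obtain ⟨c₂, hc₂C, hc₂IY⟩ := Set.not_subset.mp hCnotIY
    have hc₂I₂ : c₂ ∈ I₂ := ((hCS hc₂C).resolve_left hc₂IY)
    have hc₂I₀ : c₂ ∉ I₀ := fun h => hc₂IY (hI₀IY h)
    by_cases hZY : M.closure C ⊆ (↑Y : Set α)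
    · -- impossible : c₂ would be in the closure of I₀
      exfalso
      have hc₂DY : c₂ ∈ D ∩ (↑Y : Set α) := ⟨hI₂.subset hc₂I₂, hZY (hCcl hc₂C)⟩
      have hxcl : c₂ ∈ M.closure (I₂ \ {c₂}) :=
        M.closure_subset_closure (subset_diff_singleton hI₀I₂ hc₂I₀) (hclI₀ hc₂DY)
      exact hI₂.indep.notMem_closure_sdiff_of_mem hc₂I₂ hxcl
    · -- the join of Y and cl(C) is a bigger cyclic flat inside cl(Y ∪ D)
      set Z'' : Set α := M.closure ((↑Y : Set α) ∪ M.closure C) with hZ''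
      have hZ''c : CyclicFlat M Z'' := by
        have := cyclicFlat_closure_sUnion (M := M) (S := {(↑Y : Set α), M.closure C})
          (by rintro F (rfl | rfl); exacts [hYc, hZ'c])
          (by rintro F (rfl | rfl); exacts [hYE, M.closure_subset_ground C])
        rwa [Set.sUnion_pair] at this
      have hYZ'' : (↑Y : Set α) ⊆ Z'' :=
        (Set.subset_union_left).trans
          (M.subset_closure _ (Set.union_subset hYE (M.closure_subset_ground C)))
      have hclCZ'' : M.closure C ⊆ Z'' :=
        (Set.subset_union_right).trans
          (M.subset_closure _ (Set.union_subset hYE (M.closure_subset_ground C)))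
      have hZ''ne : Z'' ≠ (↑Y : Set α) := by
        intro he
        exact hZY (hclCZ''.trans he.subset)
      -- Z'' is spanned by Y ∪ D
      have hZ''sub : Z'' ⊆ M.closure ((↑Y : Set α) ∪ D) := by
        apply M.closure_subset_closure_of_subset_closure
        refine Set.union_subset (M.subset_closure_of_subset' Set.subset_union_left hYE) ?_
        exact M.closure_subset_closure_of_subset_closure
          (M.subset_closure_of_subset' (hCS.trans hSsub) hCE)
      have hrkZ'' : rk M Z'' ≤ rk M ((↑Y : Set α) ∪ D) := rk_le_of_subset_closure hZ''sub
      -- numeric: rk Z'' ≥ rk Y + β Y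
      set Zf'' : Finset α := (Set.toFinite Z'').toFinset with hZf''def
      have hZf''coe : (↑Zf'' : Set α) = Z'' := Set.Finite.coe_toFinset _
      have hZf''mem : Zf'' ∈ Zf M := mem_Zf.mpr (by rw [hZf''coe]; exact hZ''c)
      have hprZ'' := principal_eq (M := M) hZf''mem
      have hprY := principal_eq (M := M) hY
      have hsubsum : insert Y ((Zf M).filter (fun Z => Zf'' ⊆ Z))
          ⊆ (Zf M).filter (fun Z => Y ⊆ Z) := by
        intro Z hZ
        rcases Finset.mem_insert.mp hZ with rfl | hZ'
        · exact Finset.mem_filter.mpr ⟨hY, subset_rfl⟩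
        · rw [Finset.mem_filter] at hZ' ⊢
          refine ⟨hZ'.1, ?_⟩
        -- Y ⊆ Zf'' ⊆ Z
          have hYZf'' : Y ⊆ Zf'' := by
            intro x hx
            rw [← Finset.mem_coe, hZf''coe]
            exact hYZ'' hx
          exact hYZf''.trans hZ'.2
      have hYnot : Y ∉ (Zf M).filter (fun Z => Zf'' ⊆ Z) := by
        rw [Finset.mem_filter]
        rintro ⟨-, hZf''Y⟩
        apply hZ''ne
        apply Set.Subset.antisymm
        · rw [← hZf''coe]
          exact_mod_cast hZf''Y
        · exact hYZ''
      have hsumle : beta M Y + ∑ Z ∈ (Zf M).filter (fun Z => Zf'' ⊆ Z), beta M Z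
          ≤ ∑ Z ∈ (Zf M).filter (fun Z => Y ⊆ Z), beta M Z := by
        rw [← Finset.sum_insert hYnot]
        exact Finset.sum_le_sum_of_subset_of_nonneg hsubsum
          (fun Z hZ _ => beta_nonneg hH (Finset.mem_filter.mp hZ).1)
      have hrkZ''coe : rk M (↑Zf'' : Set α) = rk M Z'' := by rw [hZf''coe]
      rw [hrkZ''coe] at hprZ''
      omega

lemma sdiff_filt {A : Finset (Finset α)} (hdwn : ∀ Y ∈ A, ∀ Z ∈ Zf M, Z ⊆ Y → Z ∈ A) :
    (∀ Y ∈ Zf M \ A, CyclicFlat M (↑Y : Set α)) ∧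
      (∀ A₁ ∈ Zf M \ A, ∀ B : Finset α, CyclicFlat M ↑B → A₁ ⊆ B → B ∈ Zf M \ A) := by
  constructor
  · exact fun Y hY => mem_Zf.mp (Finset.mem_sdiff.mp hY).1
  · intro A₁ hA₁ B hBc hAB
    rw [Finset.mem_sdiff] at hA₁ ⊢
    refine ⟨mem_Zf.mpr hBc, fun hBA => hA₁.2 (hdwn B hBA A₁ hA₁.1 hAB)⟩

lemma insert_sdiff_filt {A : Finset (Finset α)} (hAZ : A ⊆ Zf M)
    (hdwn : ∀ Y ∈ A, ∀ Z ∈ Zf M, Z ⊆ Y → Z ∈ A)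
    {Y : Finset α} (hYA : Y ∈ A) (hmax : ∀ Z ∈ A, Z.card ≤ Y.card) :
    (∀ Y₁ ∈ insert Y (Zf M \ A), CyclicFlat M (↑Y₁ : Set α)) ∧
      (∀ A₁ ∈ insert Y (Zf M \ A), ∀ B : Finset α, CyclicFlat M ↑B → A₁ ⊆ B →
        B ∈ insert Y (Zf M \ A)) := by
  constructor
  · intro Y₁ hY₁
    rcases Finset.mem_insert.mp hY₁ with rfl | hY₁
    · exact mem_Zf.mp (hAZ hYA)
    · exact mem_Zf.mp (Finset.mem_sdiff.mp hY₁).1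
  · intro A₁ hA₁ B hBc hAB
    rcases Finset.mem_insert.mp hA₁ with rfl | hA₁
    · by_cases hBA : B ∈ A
      · have : A₁ = B := Finset.eq_of_subset_of_card_le hAB (hmax B hBA)
        rw [← this]
        exact Finset.mem_insert_self _ _
      · exact Finset.mem_insert_of_mem (Finset.mem_sdiff.mpr ⟨mem_Zf.mpr hBc, hBA⟩)
    · exact Finset.mem_insert_of_mem ((sdiff_filt hdwn).2 A₁ hA₁ B hBc hAB)

lemma D_subset_XK {A : Finset (Finset α)}
    (hdwn : ∀ Y ∈ A, ∀ Z ∈ Zf M, Z ⊆ Y → Z ∈ A) {Y : Finset α} (hYA : Y ∈ A) :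
    XK M ((Zf M).filter (fun Z => ¬ Z ⊆ Y)) ⊆ XK M (Zf M \ A) := by
  apply XK_anti
  intro Z hZ
  rw [Finset.mem_sdiff] at hZ
  rw [Finset.mem_filter]
  exact ⟨hZ.1, fun hZY => hZ.2 (hdwn Y hYA Z hZ.1 hZY)⟩

lemma lspec (hH : Hyp M) {A : Finset (Finset α)} (hAZ : A ⊆ Zf M)
    (hdwn : ∀ Y ∈ A, ∀ Z ∈ Zf M, Z ⊆ Y → Z ∈ A)
    {Y : Finset α} (hYA : Y ∈ A) (hmax : ∀ Z ∈ A, Z.card ≤ Y.card) :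
    (rk M (XK M (Zf M \ A)) : ℤ)
      ≤ rk M (XK M (insert Y (Zf M \ A)) ∪ XK M ((Zf M).filter (fun Z => ¬ Z ⊆ Y))) := by
  classical
  have hY : Y ∈ Zf M := hAZ hYA
  set K : Finset (Finset α) := Zf M \ A with hK
  set W : Set α := XK M K with hW
  set D : Set α := XK M ((Zf M).filter (fun Z => ¬ Z ⊆ Y)) with hD
  have hHK := hH.eval (sdiff_filt hdwn).1 (sdiff_filt hdwn).2
  have hHKY := hH.eval (insert_sdiff_filt hAZ hdwn hYA hmax).1 (insert_sdiff_filt hAZ hdwn hYA hmax).2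
  rw [← hK] at hHK hHKY
  rw [← hW] at hHK
  have hYK : Y ∉ K := by
    rw [hK, Finset.mem_sdiff]
    exact fun h => h.2 hYA
  have hXKY : XK M (insert Y K) = W ∩ (↑Y : Set α) := by rw [hW]; exact XK_insert
  rw [Finset.sum_insert hYK, hXKY] at hHKY
  have hDW : D ⊆ W := by rw [hW, hD]; exact D_subset_XK hdwn hYA
  have hstar := star hH hY
  rw [← hD] at hstar
  -- submodularity
  have hsub := rk_submod M ((W ∩ (↑Y : Set α)) ∪ D) (↑Y : Set α)
  have e_union : ((W ∩ (↑Y : Set α)) ∪ D) ∪ (↑Y : Set α) = (↑Y : Set α) ∪ D := by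
    ext x
    simp only [Set.mem_union, Set.mem_inter_iff]
    tauto
  have e_inter : ((W ∩ (↑Y : Set α)) ∪ D) ∩ (↑Y : Set α) = W ∩ (↑Y : Set α) := by
    ext x
    simp only [Set.mem_union, Set.mem_inter_iff]
    constructor
    · rintro ⟨h1 | h2, hxY⟩
      · exact h1
      · exact ⟨hDW h2, hxY⟩
    · intro h; exact ⟨Or.inl h, h.2⟩
  rw [e_union, e_inter] at hsub
  rw [hXKY]
  omega

lemma XK_Zf_subset_closure_empty : XK M (Zf M) ⊆ M.closure (∅ : Set α) := by
  intro x hx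
  have hO : (Set.toFinite (M.closure (∅ : Set α))).toFinset ∈ Zf M :=
    mem_Zf.mpr (by rw [Set.Finite.coe_toFinset]; exact cyclicFlat_closure_empty M)
  have hmem := (mem_XK.mp hx).2 _ hO
  exact (Set.Finite.mem_toFinset _).mp hmem

lemma cons (hH : Hyp M) : ∀ (n : ℕ) (A : Finset (Finset α)), A.card ≤ n → A ⊆ Zf M →
    (∀ Y ∈ A, ∀ Z ∈ Zf M, Z ⊆ Y → Z ∈ A) →
    ∃ I : Set α, M.Indep I ∧ I ⊆ XK M (Zf M \ A) ∧ XK M (Zf M \ A) ⊆ M.closure I ∧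
      ∀ F ∈ Zf M, (∑ Z ∈ A.filter (fun Z => ¬ F ⊆ Z), beta M Z) ≤ ((I ∩ (↑F : Set α)).ncard : ℤ) := by
  classical
  have base : ∀ A : Finset (Finset α), A = ∅ →
      ∃ I : Set α, M.Indep I ∧ I ⊆ XK M (Zf M \ A) ∧ XK M (Zf M \ A) ⊆ M.closure I ∧
      ∀ F ∈ Zf M, (∑ Z ∈ A.filter (fun Z => ¬ F ⊆ Z), beta M Z)
        ≤ ((I ∩ (↑F : Set α)).ncard : ℤ) := by
    rintro A rfl
    refine ⟨∅, M.empty_indep, Set.empty_subset _, ?_, ?_⟩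
    · rw [Finset.sdiff_empty]
      exact XK_Zf_subset_closure_empty
    · intro F hF
      simp
  intro n
  induction n with
  | zero =>
    intro A hcard hAZ hdwn
    exact base A (Finset.card_eq_zero.mp (Nat.le_zero.mp hcard))
  | succ n IH =>
    intro A hcard hAZ hdwn
    by_cases hA0 : A = ∅
    · exact base A hA0
    obtain ⟨Y, hYA, hmax⟩ := A.exists_max_image Finset.card (Finset.nonempty_of_ne_empty hA0)
    have hY : Y ∈ Zf M := hAZ hYA
    set A' : Finset (Finset α) := A.erase Y with hA'
    have hcard' : A'.card ≤ n := by
      rw [hA', Finset.card_erase_of_mem hYA]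
      omega
    have hA'Z : A' ⊆ Zf M := (Finset.erase_subset _ _).trans hAZ
    have hdwn' : ∀ Y₁ ∈ A', ∀ Z ∈ Zf M, Z ⊆ Y₁ → Z ∈ A' := by
      intro Y₁ hY₁ Z hZ hZY₁
      have hY₁A : Y₁ ∈ A := Finset.mem_of_mem_erase hY₁
      have hZA : Z ∈ A := hdwn Y₁ hY₁A Z hZ hZY₁
      rw [Finset.mem_erase]
      refine ⟨fun hZe => ?_, hZA⟩
      rw [hZe] at hZY₁
      have hEq : Y = Y₁ := Finset.eq_of_subset_of_card_le hZY₁ (hmax Y₁ hY₁A)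
      exact (Finset.mem_erase.mp hY₁).1 hEq.symm
    obtain ⟨I', hI'ind, hI'sub, hI'span, hI'count⟩ := IH A' hcard' hA'Z hdwn'
    set K : Finset (Finset α) := Zf M \ A with hK
    have hKid : Zf M \ A' = insert Y K := by
      ext Z
      simp only [hA', hK, Finset.mem_sdiff, Finset.mem_erase, Finset.mem_insert, not_and]
      constructor
      · rintro ⟨hZf, h⟩
        by_cases hZY : Z = Y
        · exact Or.inl hZY
        · exact Or.inr ⟨hZf, h hZY⟩
      · rintro (rfl | ⟨hZf, hZA⟩)
        · exact ⟨hY, fun h hc => absurd rfl h⟩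
        · exact ⟨hZf, fun _ h => hZA h⟩
    rw [hKid] at hI'sub hI'span
    set D : Set α := XK M ((Zf M).filter (fun Z => ¬ Z ⊆ Y)) with hD
    set U : Set α := XK M (insert Y K) ∪ D with hU
    have hI'U : I' ⊆ U := hI'sub.trans Set.subset_union_left
    obtain ⟨J, hJ, hI'J⟩ := hI'ind.subset_isBasis'_of_subset hI'U
    have hDW : D ⊆ XK M K := D_subset_XK hdwn hYA
    have hUW : U ⊆ XK M K :=
      Set.union_subset (XK_anti (Finset.subset_insert _ _)) hDW
    have hls := lspec hH hAZ hdwn hYA hmax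
    have hrkU : rk M U = rk M (XK M K) := by
      have h1 : rk M U ≤ rk M (XK M K) := rk_mono hUW
      have h2 : rk M (XK M K) ≤ rk M U := by exact_mod_cast hls
      omega
    have hJspan : XK M K ⊆ M.closure J := by
      have h1 : XK M K ⊆ M.closure U :=
        spanning_of_rk_le hUW (XK_subset_ground _) (le_of_eq hrkU.symm)
      rwa [← hJ.closure_eq_closure] at h1
    have hJsub : J ⊆ XK M K := hJ.subset.trans hUW
    have hJcard : J.ncard = rk M (XK M K) := by
      rw [rk_eq_ncard hJ] at hrkU
      omega
    -- rank values from the hypothesis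
    have hHK := hH.eval (sdiff_filt hdwn).1 (sdiff_filt hdwn).2
    have hHKY := hH.eval (insert_sdiff_filt hAZ hdwn hYA hmax).1
      (insert_sdiff_filt hAZ hdwn hYA hmax).2
    rw [← hK] at hHK hHKY
    have hYK : Y ∉ K := by rw [hK, Finset.mem_sdiff]; exact fun h => h.2 hYA
    rw [Finset.sum_insert hYK] at hHKY
    have hI'card : I'.ncard = rk M (XK M (insert Y K)) := by
      have h1 : rk M (XK M (insert Y K)) ≤ rk M I' := rk_le_of_subset_closure hI'span
      rw [rk_indep hI'ind] at h1
      have h2 : I'.ncard ≤ rk M (XK M (insert Y K)) := indep_ncard_le_rk hI'ind hI'sub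
      omega
    have hdiffD : J \ I' ⊆ D := by
      rintro x ⟨hxJ, hxI'⟩
      rcases hJ.subset hxJ with hx1 | hx2
      · exfalso
        have hxcl : x ∈ M.closure (J \ {x}) :=
          M.closure_subset_closure (subset_diff_singleton hI'J hxI') (hI'span hx1)
        exact hJ.indep.notMem_closure_sdiff_of_mem hxJ hxcl
      · exact hx2
    have hI'Jcard : I'.ncard ≤ J.ncard := Set.ncard_le_ncard hI'J (Set.toFinite J)
    have hdiffcard : ((J \ I').ncard : ℤ) = beta M Y := by
      rw [Set.ncard_diff hI'J (Set.toFinite I')]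
      have : ((J.ncard - I'.ncard : ℕ) : ℤ) = (J.ncard : ℤ) - I'.ncard := by
        omega
      rw [this, hJcard, hI'card]
      omega
    refine ⟨J, hJ.indep, hJsub, hJspan, ?_⟩
    intro F hF
    by_cases hFY : F ⊆ Y
    · have hfe : A.filter (fun Z => ¬ F ⊆ Z) = A'.filter (fun Z => ¬ F ⊆ Z) := by
        rw [hA', Finset.filter_erase, Finset.erase_eq_of_notMem]
        rw [Finset.mem_filter]
        rintro ⟨-, h⟩
        exact h hFY
      rw [hfe]
      refine (hI'count F hF).trans ?_
      have : (I' ∩ (↑F : Set α)).ncard ≤ (J ∩ (↑F : Set α)).ncard :=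
        Set.ncard_le_ncard (Set.inter_subset_inter_left _ hI'J) (Set.toFinite _)
      exact_mod_cast this
    · have hfe : A.filter (fun Z => ¬ F ⊆ Z) = insert Y (A'.filter (fun Z => ¬ F ⊆ Z)) := by
        conv_lhs => rw [← Finset.insert_erase hYA]
        rw [Finset.filter_insert, if_pos hFY]
      have hYnot : Y ∉ A'.filter (fun Z => ¬ F ⊆ Z) := by
        rw [Finset.mem_filter]
        rintro ⟨h, -⟩
        exact (Finset.mem_erase.mp h).1 rfl
      rw [hfe, Finset.sum_insert hYnot]
      have hJF : (I' ∩ (↑F : Set α)) ∪ (J \ I') ⊆ J ∩ (↑F : Set α) := by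
        apply Set.union_subset
        · exact Set.inter_subset_inter_left _ hI'J
        · intro x hx
          refine ⟨hx.1, ?_⟩
          have hxD : x ∈ D := hdiffD hx
          have hFmem : F ∈ (Zf M).filter (fun Z => ¬ Z ⊆ Y) := Finset.mem_filter.mpr ⟨hF, hFY⟩
          exact XK_subset_mem hFmem hxD
      have hdisj : Disjoint (I' ∩ (↑F : Set α)) (J \ I') := by
        rw [Set.disjoint_left]
        rintro x ⟨hx1, -⟩ ⟨-, hx2⟩
        exact hx2 hx1
      have hcardun : ((I' ∩ (↑F : Set α)) ∪ (J \ I')).ncard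
          = (I' ∩ (↑F : Set α)).ncard + (J \ I').ncard :=
        Set.ncard_union_eq hdisj (Set.toFinite _) (Set.toFinite _)
      have hle : ((I' ∩ (↑F : Set α)) ∪ (J \ I')).ncard ≤ (J ∩ (↑F : Set α)).ncard :=
        Set.ncard_le_ncard hJF (Set.toFinite _)
      have hc' := hI'count F hF
      omega

lemma converse_direction (M : Matroid α) (hH : Hyp M) : FundTransversal M := by
  classical
  obtain ⟨I, hInd, hIsub, hIspan, hIcount⟩ := cons hH (Zf M).card (Zf M) le_rfl
    subset_rfl (fun Y hY Z hZ _ => hZ)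
  rw [Finset.sdiff_self, XK_empty] at hIsub hIspan
  have hBase : M.IsBase I := hInd.isBase_of_ground_subset_closure hIspan
  refine ⟨I, hBase, ?_⟩
  intro F hF
  have hFE : F ⊆ M.E := hF.1.subset_ground
  set Ff : Finset α := (Set.toFinite F).toFinset with hFf
  have hFfc : (↑Ff : Set α) = F := Set.Finite.coe_toFinset _
  have hFfZ : Ff ∈ Zf M := mem_Zf.mpr (by rw [hFfc]; exact hF)
  have hc := hIcount Ff hFfZ
  rw [hFfc] at hc
  have hZfsum : ∑ Z ∈ Zf M, beta M Z = (rk M M.E : ℤ) := by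
    have h := hH.eval (K := Zf M) (fun Z hZ => mem_Zf.mp hZ)
      (fun A hA B hBc _ => mem_Zf.mpr hBc)
    have h0 : rk M (XK M (Zf M)) = 0 := by
      have h1 : rk M (XK M (Zf M)) ≤ rk M (∅ : Set α) :=
        rk_le_of_subset_closure XK_Zf_subset_closure_empty
      rw [rk_empty] at h1
      omega
    rw [h0] at h
    simpa using h
  have hsplit := Finset.sum_filter_add_sum_filter_not (Zf M) (fun Z => Ff ⊆ Z) (beta M)
  have hpr := principal_eq (M := M) hFfZ
  have hrkFf : rk M (↑Ff : Set α) = rk M F := by rw [hFfc]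
  rw [hrkFf] at hpr
  have hrkF : (rk M F : ℤ) ≤ ((I ∩ F).ncard : ℤ) := by
    have : ∑ Z ∈ (Zf M).filter (fun Z => ¬ Ff ⊆ Z), beta M Z = (rk M F : ℤ) := by
      omega
    rw [← this]
    exact hc
  have hrk2 : rk M F ≤ rk M (I ∩ F) := by
    rw [rk_indep (hInd.subset inter_subset_left)]
    exact_mod_cast hrkF
  exact spanning_of_rk_le inter_subset_right hFE hrk2

end MCoPaper

theorem stmt14 [Fintype α] (M : Matroid α) :
    FundTransversal M ↔
      ∀ F : Finset (Finset α), (∀ Y ∈ F, CyclicFlat M ↑Y) →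
        (∀ A ∈ F, ∀ B : Finset α, CyclicFlat M ↑B → A ⊆ B → B ∈ F) →
        ∑ Y ∈ F, beta M Y =
          (rk M M.E : ℤ) - rk M (M.E ∩ ⋂ Y ∈ F, (↑Y : Set α)) :=
  ⟨forward_direction M, fun h => converse_direction M h⟩
end

section
/- For any finite matroid M, α(F) = 0 for every flat F of M that is not cyclic, where α(X) = η(X) − Σ_{flats F' ⊊ X} α(F') and η is the nullity function. -/
open Matroid Set

variable {α : Type*}

section Aux

open MCoPaper

private lemma rk_eq_ncard_of_basis [Fintype α] {M : Matroid α} {I X : Set α}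
    (hI : M.IsBasis I X) : rk M X = I.ncard := by
  have hband : ∀ n ∈ {n | ∃ J, M.Indep J ∧ J ⊆ X ∧ J.ncard = n}, n ≤ I.ncard := by
    rintro n ⟨J, hJ, hJX, rfl⟩
    obtain ⟨I', hI', hJI'⟩ := hJ.subset_isBasis_of_subset hJX hI.subset_ground
    have h1 : J.ncard ≤ I'.ncard := Set.ncard_le_ncard hJI' (Set.toFinite _)
    have h2 : I'.ncard = I.ncard := by
      have := hI'.encard_eq_encard hI
      simp [Set.ncard_def, this]
    omega
  refine le_antisymm (csSup_le ⟨0, ⟨∅, M.empty_indep, empty_subset _, by simp⟩⟩ hband) ?_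
  exact le_csSup ⟨I.ncard, hband⟩ ⟨I, hI.indep, hI.subset, rfl⟩

open Finset in
private lemma alpha_flat_zero_aux [Fintype α] (M : Matroid α) :
    ∀ n : ℕ, ∀ F : Finset α, F.card ≤ n → M.IsFlat ↑F → ¬ CyclicFlat M ↑F → alpha M F = 0 := by
  intro n
  induction n with
  | zero =>
    intro F hcard hflat hnc
    have hF : F = ∅ := Finset.card_eq_zero.mp (Nat.le_zero.mp hcard)
    exact absurd ⟨hflat, by simp [hF]⟩ hnc
  | succ n IH =>
    intro F hcard hflat hnc
    classical
    have hFE : (↑F : Set α) ⊆ M.E := hflat.subset_ground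
    obtain ⟨e, heF, hcol⟩ : ∃ e ∈ (↑F : Set α), MCoPaper.Coloop (M ↾ (↑F : Set α)) e := by
      by_contra h
      push_neg at h
      exact hnc ⟨hflat, h⟩
    have hbase : ∀ I, M.IsBasis I ↑F → e ∈ I := fun I hIb =>
      hcol I ((Matroid.isBase_restrict_iff hFE).2 hIb)
    set G : Set α := (↑F : Set α) \ {e} with hGdef
    have hGE : G ⊆ M.E := (Set.diff_subset).trans hFE
    obtain ⟨I, hI⟩ := M.exists_isBasis G hGE
    have heI : e ∉ I := fun h => (hI.subset h).2 rfl
    -- e is not in the closure of G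
    have heIcl : e ∉ M.closure G := by
      intro he
      have hFcl : (↑F : Set α) ⊆ M.closure I := by
        rw [hI.closure_eq_closure]
        intro x hx
        rcases eq_or_ne x e with rfl | hne
        · exact he
        · exact M.subset_closure G hGE ⟨hx, hne⟩
      have hIF : M.IsBasis I ↑F :=
        hI.indep.isBasis_of_subset_of_subset_closure (hI.subset.trans Set.diff_subset) hFcl
      exact heI (hbase I hIF)
    have hclG : M.closure G = G := by
      apply subset_antisymm ?_ (M.subset_closure G hGE)
      intro x hx
      refine ⟨?_, fun hxe => heIcl (by rwa [Set.mem_singleton_iff.mp hxe] at hx)⟩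
      have : M.closure G ⊆ M.closure ↑F := M.closure_subset_closure Set.diff_subset
      rw [hflat.closure] at this
      exact this hx
    have hGflat : M.IsFlat G := by
      refine ⟨fun I' X hI'G hI'X => ?_, hGE⟩
      have hXcl : X ⊆ M.closure I' := hI'X.subset_closure
      rwa [hI'G.closure_eq_closure, hclG] at hXcl
    -- rank computations
    have hins : M.Indep (insert e I) := by
      rw [hI.indep.insert_indep_iff_of_notMem heI]
      exact ⟨hFE heF, fun h => heIcl (by rwa [hI.closure_eq_closure] at h)⟩
    have hIF : M.IsBasis (insert e I) ↑F := by
      refine hins.isBasis_of_subset_of_subset_closure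
        (Set.insert_subset heF (hI.subset.trans Set.diff_subset)) ?_
      intro x hx
      rcases eq_or_ne x e with rfl | hne
      · exact M.mem_closure_of_mem (Set.mem_insert _ _) hins.subset_ground
      · have hxG : x ∈ G := ⟨hx, hne⟩
        have h1 : x ∈ M.closure I := by
          rw [hI.closure_eq_closure]; exact M.subset_closure G hGE hxG
        exact M.closure_subset_closure (Set.subset_insert _ _) h1
    have hrkF : rk M ↑F = I.ncard + 1 := by
      rw [rk_eq_ncard_of_basis hIF, Set.ncard_insert_of_notMem heI (Set.toFinite _)]
    have hrkG : rk M G = I.ncard := rk_eq_ncard_of_basis hI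
    have heF' : e ∈ F := by exact_mod_cast heF
    have hcoeErase : (↑(F.erase e) : Set α) = G := by
      rw [Finset.coe_erase]
    -- every flat contained in F but not in F.erase e is not cyclic
    have hnotcyc : ∀ F' : Finset α, M.IsFlat ↑F' → F' ⊆ F → e ∈ F' → ¬ CyclicFlat M ↑F' := by
      rintro F' hF'flat hF'F heF'' ⟨-, hall⟩
      refine hall e (by exact_mod_cast heF'') ?_
      intro B hB
      have hBbasis : M.IsBasis B ↑F' := (Matroid.isBase_restrict_iff hF'flat.subset_ground).1 hB
      by_contra heB
      have hBG : B ⊆ G := fun x hx =>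
        ⟨(Finset.coe_subset.mpr hF'F) (hBbasis.subset hx), fun hxe => heB (by rw [Set.mem_singleton_iff] at hxe; rwa [hxe] at hx)⟩
      have : e ∈ M.closure B := hBbasis.subset_closure (by exact_mod_cast heF'')
      exact heIcl (hclG ▸ (M.closure_subset_closure hBG this) : e ∈ M.closure G)
    -- unfold alpha at F and at F.erase e
    rw [MCoPaper.alpha, Finset.sum_attach _ (fun Y => alpha M Y)]
    have herase : alpha M (F.erase e) =
        ((F.erase e).card : ℤ) - rk M ↑(F.erase e) -
          ∑ Y ∈ Finset.univ.filter (fun Y : Finset α => M.IsFlat ↑Y ∧ Y ⊂ F.erase e),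
            alpha M Y := by
      rw [MCoPaper.alpha, Finset.sum_attach _ (fun Y => alpha M Y)]
    -- the sum over flats strictly inside F equals the sum over flats inside F.erase e
    have hTS : (Finset.univ.filter (fun Y : Finset α => M.IsFlat ↑Y ∧ Y ⊂ F)).filter
        (fun Y => Y ⊆ F.erase e) ⊆ Finset.univ.filter (fun Y : Finset α => M.IsFlat ↑Y ∧ Y ⊂ F) :=
      Finset.filter_subset _ _
    have hstep1 : ∑ Y ∈ Finset.univ.filter (fun Y : Finset α => M.IsFlat ↑Y ∧ Y ⊂ F), alpha M Y =
        ∑ Y ∈ (Finset.univ.filter (fun Y : Finset α => M.IsFlat ↑Y ∧ Y ⊂ F)).filter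
          (fun Y => Y ⊆ F.erase e), alpha M Y := by
      refine (Finset.sum_subset hTS ?_).symm
      intro Y hY hYnot
      simp only [Finset.mem_filter, Finset.mem_univ, true_and] at hY hYnot
      have heY : e ∈ Y := by
        by_contra heY
        exact hYnot ⟨hY, fun x hx => Finset.mem_erase.mpr
          ⟨fun hxe => heY (hxe ▸ hx), hY.2.subset hx⟩⟩
      have hYcard : Y.card ≤ n := by
        have := Finset.card_lt_card hY.2
        omega
      exact IH Y hYcard hY.1 (hnotcyc Y hY.1 hY.2.subset heY)
    have hErFlat : M.IsFlat ↑(F.erase e) := by rw [hcoeErase]; exact hGflat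
    have hsplit : (Finset.univ.filter (fun Y : Finset α => M.IsFlat ↑Y ∧ Y ⊂ F)).filter
        (fun Y => Y ⊆ F.erase e) =
        insert (F.erase e)
          (Finset.univ.filter (fun Y : Finset α => M.IsFlat ↑Y ∧ Y ⊂ F.erase e)) := by
      ext Y
      simp only [Finset.mem_filter, Finset.mem_univ, true_and, Finset.mem_insert]
      constructor
      · rintro ⟨⟨hYflat, -⟩, hYsub⟩
        rcases eq_or_lt_of_le hYsub with h | h
        · exact Or.inl h
        · exact Or.inr ⟨hYflat, h⟩
      · rintro (rfl | ⟨hYflat, hYss⟩)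
        · exact ⟨⟨hErFlat, Finset.erase_ssubset heF'⟩, le_refl _⟩
        · exact ⟨⟨hYflat, hYss.trans (Finset.erase_ssubset heF')⟩, hYss.subset⟩
    have hnotmem : F.erase e ∉
        Finset.univ.filter (fun Y : Finset α => M.IsFlat ↑Y ∧ Y ⊂ F.erase e) := by
      simp only [Finset.mem_filter, Finset.mem_univ, true_and]
      exact fun h => (ssubset_irrefl _) h.2
    rw [hstep1, hsplit, Finset.sum_insert hnotmem]
    have hrkEr : rk M ↑(F.erase e) = I.ncard := by rw [hcoeErase]; exact hrkG
    have hcardEr : (F.erase e).card = F.card - 1 := Finset.card_erase_of_mem heF'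
    have hcardF : 1 ≤ F.card := Finset.card_pos.mpr ⟨e, heF'⟩
    rw [hrkF]
    have : (∑ Y ∈ Finset.univ.filter (fun Y : Finset α => M.IsFlat ↑Y ∧ Y ⊂ F.erase e),
        alpha M Y) = ((F.erase e).card : ℤ) - rk M ↑(F.erase e) - alpha M (F.erase e) := by
      rw [herase]; ring
    rw [this, hrkEr, hcardEr]
    have : ((F.card - 1 : ℕ) : ℤ) = (F.card : ℤ) - 1 := by
      omega
    rw [this]
    push_cast
    ring

end Aux

open MCoPaper

theorem stmt16 [Fintype α] (M : Matroid α) (F : Finset α) (hflat : M.IsFlat ↑F)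
    (hnc : ¬ CyclicFlat M ↑F) : alpha M F = 0 :=
  alpha_flat_zero_aux M F.card F le_rfl hflat hnc
end
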